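/- arXiv:0812.3236 — 8 statements merged into one kernel-verified Lean document; each statement's English description precedes it below -/
import Mathlib

section
/- Let M be an snt-module over F and let U ⊆ M be a t-stable isotropic subspace that is not properly contained in any other t-stable isotropic subspace of M. Then U is a Lagrangian subspace of M, i.e. U is isotropic of dimension (dim_F M)/2; hence U ∈ Gr(M,t). -/
/-- A symplectic nilpotent `t`-module (snt-module) over a field `F`. -/
structure SntModule (F M : Type*) [Field F] [AddCommGroup M] [Module F M] where
  form : M →ₗ[F] M →ₗ[F] F
  t : M →ₗ[F] M
  alt : ∀ x : M, form x x = 0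
  nondeg : ∀ x : M, (∀ y : M, form x y = 0) → x = 0
  nilp : ∃ N : ℕ, 0 < N ∧ t ^ N = 0
  selfdual : ∀ x y : M, form (t x) y = form x (t y)

/-- A `t`-stable isotropic subspace of an snt-module that is maximal
among `t`-stable isotropic subspaces is Lagrangian, i.e. has dimension `(dim M)/2`. -/
theorem snt_maximal_isotropic_is_lagrangian {F M : Type*} [Field F] [CharZero F]
    [AddCommGroup M] [Module F M] [FiniteDimensional F M]
    (S : SntModule F M) (U : Submodule F M)
    (hstab : ∀ x ∈ U, S.t x ∈ U)
    (hiso : ∀ x ∈ U, ∀ y ∈ U, S.form x y = 0)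
    (hmax : ∀ U' : Submodule F M, (∀ x ∈ U', S.t x ∈ U') →
      (∀ x ∈ U', ∀ y ∈ U', S.form x y = 0) → U ≤ U' → U' = U) :
    2 * Module.finrank F U = Module.finrank F M := by
  classical
  set B : LinearMap.BilinForm F M := S.form with hB
  have hAlt : B.IsAlt := S.alt
  have hRefl : B.IsRefl := hAlt.isRefl
  have hNd : B.Nondegenerate := ⟨S.nondeg, fun y hy => S.nondeg y fun x => hRefl x y (hy x)⟩
  set W : Submodule F M := B.orthogonal U with hW
  -- U ≤ W
  have hUW : U ≤ W := fun x hx => fun n hn => hiso n hn x hx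
  -- W is t-stable
  have hWstab : ∀ x ∈ W, S.t x ∈ W := by
    intro x hx n hn
    have : B n (S.t x) = B (S.t n) x := (S.selfdual n x).symm
    show B n (S.t x) = 0
    rw [this]
    exact hx (S.t n) (hstab n hn)
  -- W ≤ U
  have hWU : W ≤ U := by
    by_contra h
    -- find v ∈ W \ U with t v ∈ U
    obtain ⟨N, hN, hNil⟩ := S.nilp
    have hex : ∃ k : ℕ, ∀ x ∈ W, (S.t ^ k) x ∈ U := by
      refine ⟨N, fun x _ => ?_⟩
      rw [hNil]
      exact U.zero_mem
    let k := Nat.find hex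
    have hk : ∀ x ∈ W, (S.t ^ k) x ∈ U := Nat.find_spec hex
    have hk0 : k ≠ 0 := by
      intro h0
      apply h
      intro x hx
      have := hk x hx
      rwa [h0, pow_zero, Module.End.one_apply] at this
    obtain ⟨x, hxW, hxU⟩ : ∃ x ∈ W, (S.t ^ (k - 1)) x ∉ U := by
      have := Nat.find_min hex (m := k - 1) (Nat.sub_lt (Nat.pos_of_ne_zero hk0) one_pos)
      push_neg at this
      exact this
    set v : M := (S.t ^ (k - 1)) x with hv
    have hpow : ∀ (n : ℕ), ∀ y ∈ W, (S.t ^ n) y ∈ W := by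
      intro n
      induction n with
      | zero => intro y hy; simpa using hy
      | succ m ih =>
        intro y hy
        rw [pow_succ', Module.End.mul_apply]
        exact hWstab _ (ih y hy)
    have hvW : v ∈ W := hpow (k - 1) x hxW
    have htv : S.t v ∈ U := by
      have : S.t v = (S.t ^ k) x := by
        rw [hv, ← Module.End.mul_apply, ← pow_succ',
          Nat.sub_add_cancel (Nat.one_le_iff_ne_zero.mpr hk0)]
      rw [this]
      exact hk x hxW
    -- the enlarged subspace
    set U' : Submodule F M := U ⊔ F ∙ v with hU'
    have memU' : ∀ y ∈ U', ∃ u ∈ U, ∃ a : F, y = u + a • v := by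
      intro y hy
      rw [hU', Submodule.mem_sup] at hy
      obtain ⟨u, hu, w, hw, rfl⟩ := hy
      obtain ⟨a, rfl⟩ := Submodule.mem_span_singleton.mp hw
      exact ⟨u, hu, a, rfl⟩
    have hstab' : ∀ y ∈ U', S.t y ∈ U' := by
      intro y hy
      obtain ⟨u, hu, a, rfl⟩ := memU' y hy
      rw [map_add, map_smul]
      exact Submodule.add_mem _ (Submodule.mem_sup_left (hstab u hu))
        (Submodule.smul_mem _ a (Submodule.mem_sup_left htv))
    have hiso' : ∀ y ∈ U', ∀ z ∈ U', S.form y z = 0 := by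
      intro y hy z hz
      obtain ⟨u, hu, a, rfl⟩ := memU' y hy
      obtain ⟨u', hu', b, rfl⟩ := memU' z hz
      have h1 : B u u' = 0 := hiso u hu u' hu'
      have h2 : B u v = 0 := hvW u hu
      have h3 : B v u' = 0 := hRefl u' v (hvW u' hu')
      have h4 : B v v = 0 := hAlt v
      show B (u + a • v) (u' + b • v) = 0
      simp [map_add, LinearMap.add_apply, map_smul, LinearMap.smul_apply, h1, h2, h3, h4]
    have := hmax U' hstab' hiso' le_sup_left
    apply hxU
    rw [← this]
    exact Submodule.mem_sup_right (Submodule.mem_span_singleton_self v)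
  have hEq : W = U := le_antisymm hWU hUW
  have hdim : Module.finrank F W = Module.finrank F M - Module.finrank F U :=
    LinearMap.BilinForm.finrank_orthogonal hNd U
  have hle : Module.finrank F U ≤ Module.finrank F M := Submodule.finrank_le U
  rw [hEq] at hdim
  omega
end

section
/- Let M = H_k ⊕ ⋯ ⊕ H_k be a homogeneous snt-module consisting of n copies of H_k. Then the group Sp(M,t) is isomorphic to the symplectic group Sp_{2n}(F[t]/(t^k)) of 2n×2n symplectic matrices over the commutative ring F[t]/(t^k). In particular, reduction modulo t induces a surjective group homomorphism π_0 : Sp(M,t) → Sp_{2n}(F). -/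
open Matrix Polynomial

/-- Multiplication by `t` on `F[t]/(t^k)` in terms of coefficient vectors. -/
def hkShift {F : Type*} [Field F] {k : ℕ} (a : Fin k → F) : Fin k → F :=
  fun i => if h : (i : ℕ) = 0 then 0 else a ⟨(i : ℕ) - 1, by have := i.isLt; omega⟩

/-- The action of `t` on `H_k = F[t]/(t^k) ⊕ F[t]/(t^k)` in coordinates. -/
def hkT {F : Type*} [Field F] {k : ℕ} (x : (Fin k → F) × (Fin k → F)) :
    (Fin k → F) × (Fin k → F) :=
  (hkShift x.1, hkShift x.2)

/-- The symplectic form of `H_k`: both summands are isotropic and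
`⟨(t^i,0),(0,t^j)⟩ = 1` iff `i + j = k - 1`. -/
def hkForm {F : Type*} [Field F] {k : ℕ} (x y : (Fin k → F) × (Fin k → F)) : F :=
  (∑ i : Fin k, x.1 i * y.2 (Fin.rev i)) - ∑ i : Fin k, y.1 i * x.2 (Fin.rev i)

/-- The group of `F`-linear automorphisms of `M` preserving a given form
and commuting with a given map `T`; for an snt-module this is `Sp(M,t)`. -/
def sntSp (F M : Type*) [Field F] [AddCommGroup M] [Module F M]
    (form : M → M → F) (T : M → M) : Subgroup (M ≃ₗ[F] M) where
  carrier := {g | (∀ x y : M, form (g x) (g y) = form x y) ∧ ∀ x : M, g (T x) = T (g x)}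
  one_mem' := ⟨fun _ _ => rfl, fun _ => rfl⟩
  mul_mem' := by
    rintro a b ⟨ha1, ha2⟩ ⟨hb1, hb2⟩
    refine ⟨fun x y => ?_, fun x => ?_⟩
    · show form (a (b x)) (a (b y)) = form x y
      rw [ha1, hb1]
    · show a (b (T x)) = T (a (b x))
      rw [hb2, ha2]
  inv_mem' := by
    rintro a ⟨ha1, ha2⟩
    refine ⟨fun x y => ?_, fun x => ?_⟩
    · show form (a.symm x) (a.symm y) = form x y
      conv_rhs => rw [← a.apply_symm_apply x, ← a.apply_symm_apply y]
      rw [ha1]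
    · show a.symm (T x) = T (a.symm x)
      conv_lhs => rw [← a.apply_symm_apply x]
      rw [← ha2, a.symm_apply_apply]

lemma J_map {l R S : Type*} [DecidableEq l] [Fintype l] [CommRing R] [CommRing S]
    (f : R →+* S) : (Matrix.J l R).map f = Matrix.J l S := by
  ext i j
  cases i <;> cases j <;>
    simp [Matrix.J, Matrix.fromBlocks, Matrix.map_apply, Matrix.one_apply, apply_ite f]

/-- The group homomorphism between symplectic groups induced by applying
a ring homomorphism entrywise (e.g. reduction modulo `t`). -/
def spMap {l R S : Type*} [DecidableEq l] [Fintype l] [CommRing R] [CommRing S]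
    (f : R →+* S) :
    Matrix.symplecticGroup l R →* Matrix.symplecticGroup l S where
  toFun A := ⟨(A : Matrix (l ⊕ l) (l ⊕ l) R).map f, by
    have hA := A.2
    rw [SymplecticGroup.mem_iff] at hA ⊢
    rw [← Matrix.transpose_map, ← J_map f, ← Matrix.map_mul, ← Matrix.map_mul, hA]⟩
  map_one' := by
    ext i j
    simp [Matrix.map_apply, Matrix.one_apply, apply_ite f]
  map_mul' A B := by
    ext i j
    show ((A : Matrix (l ⊕ l) (l ⊕ l) R) * (B : Matrix (l ⊕ l) (l ⊕ l) R)).map f i j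
      = ((A : Matrix (l ⊕ l) (l ⊕ l) R).map f * (B : Matrix (l ⊕ l) (l ⊕ l) R).map f) i j
    rw [Matrix.map_mul]

/-- The ring homomorphism `F[t]/(t^k) → F` given by reduction modulo `t`
(evaluation at `0`), for `k ≥ 1`. -/
noncomputable def evalZeroQuot (F : Type*) [Field F] (k : ℕ) (hk : 0 < k) :
    (Polynomial F ⧸ Ideal.span {(Polynomial.X : Polynomial F) ^ k}) →+* F :=
  Ideal.Quotient.lift _ (Polynomial.evalRingHom (0 : F)) (by
    intro a ha
    rw [Ideal.mem_span_singleton] at ha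
    obtain ⟨c, rfl⟩ := ha
    simp [zero_pow hk.ne'])

section QLayer
variable (F : Type*) [Field F] (k : ℕ)

abbrev Qk := AdjoinRoot ((X : Polynomial F) ^ k)

noncomputable def epsQ : Qk F k := AdjoinRoot.root ((X : Polynomial F) ^ k)

lemma epsQ_pow_self : (epsQ F k) ^ k = 0 := by
  have h : (epsQ F k) ^ k = AdjoinRoot.mk ((X : Polynomial F)^k) ((X : Polynomial F)^k) := by
    rw [map_pow]; rfl
  rw [h, AdjoinRoot.mk_self]

lemma epsQ_pow_of_le {m : ℕ} (hm : k ≤ m) : (epsQ F k) ^ m = 0 := by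
  have : (epsQ F k) ^ m = (epsQ F k)^k * (epsQ F k)^(m - k) := by
    rw [← pow_add]; congr 1; omega
  rw [this, epsQ_pow_self, zero_mul]

noncomputable def qBasis : Module.Basis (Fin k) F (Qk F k) :=
  ((AdjoinRoot.powerBasis' (monic_X_pow (R := F) k)).basis).reindex
    (finCongr (natDegree_X_pow k))

lemma qBasis_apply (i : Fin k) : qBasis F k i = (epsQ F k) ^ (i : ℕ) := by
  rw [qBasis, Module.Basis.reindex_apply]
  exact (AdjoinRoot.powerBasis' (monic_X_pow (R := F) k)).basis_eq_pow
    ((finCongr (natDegree_X_pow k)).symm i)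

noncomputable def toQ : (Fin k → F) ≃ₗ[F] Qk F k := (qBasis F k).equivFun.symm

lemma toQ_apply (a : Fin k → F) : toQ F k a = ∑ i : Fin k, a i • (epsQ F k) ^ (i : ℕ) := by
  rw [toQ, Module.Basis.equivFun_symm_apply]
  exact Finset.sum_congr rfl fun i _ => by rw [qBasis_apply]

lemma toQ_single (j : Fin k) : toQ F k (Pi.single j 1) = (epsQ F k) ^ (j : ℕ) := by
  rw [toQ_apply, Finset.sum_eq_single j]
  · rw [Pi.single_eq_same, one_smul]
  · intro i _ hij; rw [Pi.single_apply, if_neg hij, zero_smul]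
  · intro h; exact absurd (Finset.mem_univ j) h

end QLayer

section QLayer2
variable (F : Type*) [Field F] (k : ℕ)

lemma toQ_shift (a : Fin k → F) : toQ F k (hkShift a) = epsQ F k * toQ F k a := by
  classical
  set e := epsQ F k with he
  set A : ℕ → F := fun m => if h : m < k then a ⟨m, h⟩ else 0 with hA
  set g : ℕ → Qk F k := fun m => A m • e ^ (m+1) with hg
  set h : ℕ → Qk F k := fun m => (if m = 0 then 0 else A (m-1)) • e ^ m with hh
  have hR : e * toQ F k a = ∑ m ∈ Finset.range k, g m := by
    rw [toQ_apply, Finset.mul_sum, ← Fin.sum_univ_eq_sum_range]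
    refine Finset.sum_congr rfl fun i _ => ?_
    rw [hg]
    simp only [hA, dif_pos i.isLt]
    rw [mul_smul_comm, ← pow_succ']
  have hL : toQ F k (hkShift a) = ∑ m ∈ Finset.range k, h m := by
    rw [toQ_apply, ← Fin.sum_univ_eq_sum_range]
    refine Finset.sum_congr rfl fun i _ => ?_
    rw [hh]
    by_cases h0 : (i : ℕ) = 0
    · simp only [hkShift, dif_pos h0, if_pos h0, zero_smul]
    · simp only [hkShift, dif_neg h0, if_neg h0]
      congr 1
      simp only [hA]
      rw [dif_pos (by have := i.isLt; omega : (i:ℕ) - 1 < k)]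
  have hk0 : h k = 0 := by
    by_cases h0 : k = 0
    · rw [hh]; simp [h0]
    · rw [hh]; simp only []; rw [if_neg h0, epsQ_pow_self, smul_zero]
  have h00 : h 0 = 0 := by rw [hh]; simp
  rw [hL, hR]
  have : ∑ m ∈ Finset.range k, h m = ∑ m ∈ Finset.range (k+1), h m := by
    rw [Finset.sum_range_succ, hk0, add_zero]
  rw [this, Finset.sum_range_succ', h00, add_zero]
  refine Finset.sum_congr rfl fun m _ => ?_
  rw [hh, hg]; simp only []
  rw [if_neg (Nat.succ_ne_zero m), Nat.add_sub_cancel]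

end QLayer2

section LamLayer
variable (F : Type*) [Field F] (k : ℕ) (hk : 0 < k)

noncomputable def lamQ : Qk F k →ₗ[F] F := (qBasis F k).coord ⟨k-1, Nat.sub_lt hk Nat.one_pos⟩

lemma lamQ_eps_pow (m : ℕ) : lamQ F k hk ((epsQ F k) ^ m) = if m = k - 1 then 1 else 0 := by
  by_cases hm : m < k
  · rw [← qBasis_apply F k ⟨m, hm⟩, lamQ, Module.Basis.coord_apply, Module.Basis.repr_self]
    rw [Finsupp.single_apply]
    by_cases h : m = k - 1
    · rw [if_pos h, if_pos (by ext; simp [h])]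
    · rw [if_neg h, if_neg (by intro hc; apply h; have := congrArg Fin.val hc; simpa using this)]
  · rw [epsQ_pow_of_le F k (by omega), map_zero, if_neg (by omega)]

lemma lamQ_toQ_mul (x y : Fin k → F) :
    lamQ F k hk (toQ F k x * toQ F k y) = ∑ i : Fin k, x i * y (Fin.rev i) := by
  rw [toQ_apply, toQ_apply, Finset.sum_mul_sum]
  have expand : ∀ (i j : Fin k), (x i • epsQ F k ^ (i:ℕ)) * (y j • epsQ F k ^ (j:ℕ))
      = (x i * y j) • epsQ F k ^ ((i:ℕ)+(j:ℕ)) := by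
    intro i j
    rw [smul_mul_assoc, mul_smul_comm, ← pow_add, smul_smul]
  simp only [expand]
  rw [map_sum]
  refine Finset.sum_congr rfl fun i _ => ?_
  rw [map_sum]
  have step : ∀ j : Fin k, lamQ F k hk ((x i * y j) • epsQ F k ^ ((i:ℕ)+(j:ℕ)))
      = if j = Fin.rev i then x i * y j else 0 := by
    intro j
    rw [_root_.map_smul, lamQ_eps_pow F k hk, smul_eq_mul]
    by_cases h : j = Fin.rev i
    · rw [if_pos h, if_pos, mul_one]
      subst h
      rw [Fin.val_rev]
      omega
    · rw [if_neg h, if_neg, mul_zero]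
      intro hc
      apply h
      ext
      rw [Fin.val_rev]
      omega
  simp only [step]
  rw [Finset.sum_ite_eq' Finset.univ (Fin.rev i) (fun j => x i * y j)]
  rw [if_pos (Finset.mem_univ _)]

lemma lamQ_nondeg (r : Qk F k) (h : ∀ j : Fin k, lamQ F k hk (epsQ F k ^ (j:ℕ) * r) = 0) :
    r = 0 := by
  set c := (toQ F k).symm r with hc
  have hr : r = toQ F k c := by rw [hc, LinearEquiv.apply_symm_apply]
  have hzero : ∀ j : Fin k, c (Fin.rev j) = 0 := by
    intro j
    have := h j
    rw [hr, ← toQ_single, lamQ_toQ_mul F k hk] at this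
    rw [Finset.sum_eq_single j (fun i _ hij => by rw [Pi.single_apply, if_neg hij, zero_mul])
      (fun hj => absurd (Finset.mem_univ j) hj)] at this
    rw [Pi.single_eq_same, one_mul] at this
    exact this
  have : c = 0 := by
    funext i
    have := hzero (Fin.rev i)
    rwa [Fin.rev_rev] at this
  rw [hr, this, map_zero]

end LamLayer


section MainLayer
variable (F : Type*) [Field F] (n k : ℕ)

abbrev Mmod := Fin n → (Fin k → F) × (Fin k → F)
abbrev Vmod := (Fin n ⊕ Fin n) → Qk F k

noncomputable def EE : Mmod F n k ≃ₗ[F] Vmod F n k where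
  toFun x := Sum.elim (fun i => toQ F k (x i).1) (fun i => toQ F k (x i).2)
  map_add' x y := by funext s; cases s <;> simp
  map_smul' c x := by funext s; cases s <;> simp
  invFun v := fun i => ((toQ F k).symm (v (Sum.inl i)), (toQ F k).symm (v (Sum.inr i)))
  left_inv x := by funext i; simp
  right_inv v := by funext s; cases s <;> simp

lemma EE_T (x : Mmod F n k) :
    EE F n k (fun i => hkT (x i)) = epsQ F k • EE F n k x := by
  funext s
  cases s <;>
    simp [EE, hkT, toQ_shift, Pi.smul_apply, smul_eq_mul]

lemma EE_symm_T (v : Vmod F n k) :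
    (EE F n k).symm (epsQ F k • v) = fun i => hkT ((EE F n k).symm v i) := by
  have := EE_T F n k ((EE F n k).symm v)
  rw [LinearEquiv.apply_symm_apply] at this
  rw [← this, LinearEquiv.symm_apply_apply]

noncomputable def Bq (v w : Vmod F n k) : Qk F k :=
  ∑ i : Fin n, (v (Sum.inl i) * w (Sum.inr i) - w (Sum.inl i) * v (Sum.inr i))

variable (hk : 0 < k)

lemma form_EE (x y : Mmod F n k) :
    ∑ i, hkForm (x i) (y i) = lamQ F k hk (Bq F n k (EE F n k x) (EE F n k y)) := by
  rw [Bq, map_sum]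
  refine Finset.sum_congr rfl fun i _ => ?_
  rw [map_sub, hkForm]
  simp only [EE, LinearEquiv.coe_mk, LinearMap.coe_mk, AddHom.coe_mk, Sum.elim_inl, Sum.elim_inr]
  rw [lamQ_toQ_mul F k hk, lamQ_toQ_mul F k hk]

lemma Bq_smul_left (q : Qk F k) (v w : Vmod F n k) :
    Bq F n k (q • v) w = q * Bq F n k v w := by
  rw [Bq, Bq, Finset.mul_sum]
  refine Finset.sum_congr rfl fun i _ => ?_
  simp only [Pi.smul_apply, smul_eq_mul]
  ring

lemma Bq_matrix (v w : Vmod F n k) :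
    Bq F n k v w = v ⬝ᵥ ((-(Matrix.J (Fin n) (Qk F k))) *ᵥ w) := by
  rw [Bq, dotProduct, Fintype.sum_sum_type]
  have h1 : ∀ i : Fin n, ((-(Matrix.J (Fin n) (Qk F k))) *ᵥ w) (Sum.inl i) = w (Sum.inr i) := by
    intro i
    rw [Matrix.mulVec, dotProduct, Fintype.sum_sum_type]
    simp [Matrix.J, Matrix.fromBlocks, Matrix.one_apply, Finset.sum_ite_eq']
  have h2 : ∀ i : Fin n, ((-(Matrix.J (Fin n) (Qk F k))) *ᵥ w) (Sum.inr i) = -w (Sum.inl i) := by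
    intro i
    rw [Matrix.mulVec, dotProduct, Fintype.sum_sum_type]
    simp [Matrix.J, Matrix.fromBlocks, Matrix.one_apply, Finset.sum_ite_eq']
  simp only [h1, h2]
  rw [← Finset.sum_add_distrib]
  refine Finset.sum_congr rfl fun i _ => ?_
  ring

end MainLayer


section Linearize
variable (F : Type*) [Field F] (n k : ℕ)

lemma pow_smul_comm (f : Vmod F n k → Vmod F n k)
    (hf : ∀ v, f (epsQ F k • v) = epsQ F k • f v) (m : ℕ) (v : Vmod F n k) :
    f (epsQ F k ^ m • v) = epsQ F k ^ m • f v := by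
  induction m generalizing v with
  | zero => simp
  | succ m ih =>
    have h1 : epsQ F k ^ (m+1) • v = epsQ F k ^ m • (epsQ F k • v) := by
      rw [← mul_smul, ← pow_succ]
    have h2 : epsQ F k ^ (m+1) • f v = epsQ F k ^ m • (epsQ F k • f v) := by
      rw [← mul_smul, ← pow_succ]
    rw [h1, h2, ih, hf]

lemma linQ (f : Vmod F n k →ₗ[F] Vmod F n k)
    (hf : ∀ v, f (epsQ F k • v) = epsQ F k • f v) (q : Qk F k) (v : Vmod F n k) :
    f (q • v) = q • f v := by
  obtain ⟨p, rfl⟩ := AdjoinRoot.mk_surjective q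
  induction p using Polynomial.induction_on' generalizing v with
  | add p r hp hr =>
    rw [map_add, add_smul, add_smul, map_add, hp, hr]
  | monomial m a =>
    have hm : (AdjoinRoot.mk ((X : Polynomial F)^k)) (monomial m a)
        = algebraMap F (Qk F k) a * epsQ F k ^ m := by
      rw [← C_mul_X_pow_eq_monomial, _root_.map_mul, map_pow]
      rw [AdjoinRoot.mk_C]
      rfl
    rw [hm, mul_smul, mul_smul, algebraMap_smul, algebraMap_smul, LinearMap.map_smul,
      pow_smul_comm F n k f hf]

noncomputable def toQLin (h : Vmod F n k ≃ₗ[F] Vmod F n k)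
    (hc : ∀ v, h (epsQ F k • v) = epsQ F k • h v) :
    Vmod F n k ≃ₗ[Qk F k] Vmod F n k :=
  ⟨⟨⟨h, fun a b => map_add h a b⟩, fun q v => linQ F n k h.toLinearMap hc q v⟩,
    h.symm, h.left_inv, h.right_inv⟩

noncomputable def conjE (g : Mmod F n k ≃ₗ[F] Mmod F n k) :
    Vmod F n k ≃ₗ[F] Vmod F n k :=
  ((EE F n k).symm ≪≫ₗ g) ≪≫ₗ EE F n k

lemma conjE_apply (g : Mmod F n k ≃ₗ[F] Mmod F n k) (v : Vmod F n k) :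
    conjE F n k g v = EE F n k (g ((EE F n k).symm v)) := rfl

lemma conjE_eps (g : Mmod F n k ≃ₗ[F] Mmod F n k)
    (hT : ∀ x : Mmod F n k, g (fun i => hkT (x i)) = fun i => hkT (g x i))
    (v : Vmod F n k) :
    conjE F n k g (epsQ F k • v) = epsQ F k • conjE F n k g v := by
  rw [conjE_apply, conjE_apply, EE_symm_T]
  have : (fun i => hkT ((EE F n k).symm v i)) = fun i => hkT (((EE F n k).symm v) i) := rfl
  rw [this, hT, ← EE_T]

end Linearize

section MatrixLemmas
variable {m R : Type*} [Fintype m] [DecidableEq m] [CommRing R]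

lemma dot_ext {N N' : Matrix m m R}
    (h : ∀ v w : m → R, v ⬝ᵥ (N *ᵥ w) = v ⬝ᵥ (N' *ᵥ w)) : N = N' := by
  ext i j
  have := h (Pi.single i 1) (Pi.single j 1)
  rwa [Matrix.mulVec_single_one, Matrix.mulVec_single_one, single_dotProduct,
    single_dotProduct, one_mul, one_mul] at this

lemma dot_transport (A N : Matrix m m R) (v w : m → R) :
    (A *ᵥ v) ⬝ᵥ (N *ᵥ (A *ᵥ w)) = v ⬝ᵥ ((Aᵀ * N * A) *ᵥ w) := by
  have h1 : ∀ u : m → R, (A *ᵥ v) ⬝ᵥ u = v ⬝ᵥ (Aᵀ *ᵥ u) := by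
    intro u
    rw [dotProduct_comm, Matrix.dotProduct_mulVec, dotProduct_comm,
      Matrix.mulVec_transpose]
  rw [h1, Matrix.mulVec_mulVec, Matrix.mulVec_mulVec, Matrix.mul_assoc]

end MatrixLemmas

section Assemble
variable (F : Type*) [Field F] (n k : ℕ)

noncomputable abbrev GM := sntSp F (Mmod F n k)
  (fun x y => ∑ i, hkForm (x i) (y i)) (fun x i => hkT (x i))

lemma mem_GM_iff (g : Mmod F n k ≃ₗ[F] Mmod F n k) :
    g ∈ GM F n k ↔
      (∀ x y : Mmod F n k, (∑ i, hkForm (g x i) (g y i)) = ∑ i, hkForm (x i) (y i)) ∧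
      (∀ x : Mmod F n k, g (fun i => hkT (x i)) = fun i => hkT (g x i)) := Iff.rfl

noncomputable def hQof (g : GM F n k) : Vmod F n k ≃ₗ[Qk F k] Vmod F n k :=
  toQLin F n k (conjE F n k g.1)
    (conjE_eps F n k g.1 (((mem_GM_iff F n k g.1).mp g.2).2))

noncomputable def PhiM (g : GM F n k) :
    Matrix (Fin n ⊕ Fin n) (Fin n ⊕ Fin n) (Qk F k) :=
  LinearMap.toMatrix' (hQof F n k g).toLinearMap

lemma PhiM_mulVec (g : GM F n k) (v : Vmod F n k) :
    PhiM F n k g *ᵥ v = conjE F n k g.1 v := by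
  have h1 : PhiM F n k g *ᵥ v
      = Matrix.toLin' (LinearMap.toMatrix' (hQof F n k g).toLinearMap) v := by
    rw [Matrix.toLin'_apply, PhiM]
  rw [h1, Matrix.toLin'_toMatrix']
  rfl

lemma PhiM_mem (hk : 0 < k) (g : GM F n k) : PhiM F n k g ∈ Matrix.symplecticGroup (Fin n) (Qk F k) := by
  rw [SymplecticGroup.mem_iff']
  set c := conjE F n k g.1 with hc
  have hceps : ∀ (m : ℕ) (v : Vmod F n k), c (epsQ F k ^ m • v) = epsQ F k ^ m • c v :=
    pow_smul_comm F n k c (conjE_eps F n k g.1 (((mem_GM_iff F n k g.1).mp g.2).2))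
  have step1 : ∀ v w : Vmod F n k,
      lamQ F k hk (Bq F n k (c v) (c w)) = lamQ F k hk (Bq F n k v w) := by
    intro v w
    have hform := ((mem_GM_iff F n k g.1).mp g.2).1 ((EE F n k).symm v) ((EE F n k).symm w)
    rw [form_EE F n k hk, form_EE F n k hk] at hform
    rw [LinearEquiv.apply_symm_apply, LinearEquiv.apply_symm_apply] at hform
    have e1 : EE F n k (g.1 ((EE F n k).symm v)) = c v := rfl
    have e2 : EE F n k (g.1 ((EE F n k).symm w)) = c w := rfl
    rw [e1, e2] at hform
    exact hform
  have step2 : ∀ v w : Vmod F n k, Bq F n k (c v) (c w) = Bq F n k v w := by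
    intro v w
    rw [← sub_eq_zero]
    apply lamQ_nondeg F k hk
    intro j
    rw [mul_sub, map_sub]
    have l1 : epsQ F k ^ (j:ℕ) * Bq F n k (c v) (c w)
        = Bq F n k (c (epsQ F k ^ (j:ℕ) • v)) (c w) := by
      rw [hceps, Bq_smul_left]
    have l2 : epsQ F k ^ (j:ℕ) * Bq F n k v w
        = Bq F n k (epsQ F k ^ (j:ℕ) • v) w := by
      rw [Bq_smul_left]
    rw [l1, l2, step1, sub_self]
  -- matrix identity
  have hmat : (PhiM F n k g)ᵀ * (-(Matrix.J (Fin n) (Qk F k))) * (PhiM F n k g)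
      = -(Matrix.J (Fin n) (Qk F k)) := by
    apply dot_ext
    intro v w
    rw [← dot_transport]
    have h1 : PhiM F n k g *ᵥ v = c v := PhiM_mulVec F n k g v
    have h2 : PhiM F n k g *ᵥ w = c w := PhiM_mulVec F n k g w
    rw [h1, h2, ← Bq_matrix, ← Bq_matrix, step2]
  have : -((PhiM F n k g)ᵀ * Matrix.J (Fin n) (Qk F k) * PhiM F n k g)
      = -(Matrix.J (Fin n) (Qk F k)) := by
    rw [← hmat, Matrix.mul_neg, Matrix.neg_mul]
  exact neg_inj.mp this

noncomputable def eqOfS (S : Matrix.symplecticGroup (Fin n) (Qk F k)) :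
    Vmod F n k ≃ₗ[Qk F k] Vmod F n k :=
  LinearEquiv.ofLinear (Matrix.toLin' S.1)
    (Matrix.toLin' (S⁻¹ : Matrix.symplecticGroup (Fin n) (Qk F k)).1)
    (by
      rw [← Matrix.toLin'_mul]
      have : S.1 * (S⁻¹ : Matrix.symplecticGroup (Fin n) (Qk F k)).1 = 1 := by
        rw [← Submonoid.coe_mul, mul_inv_cancel, Submonoid.coe_one]
      rw [this, Matrix.toLin'_one])
    (by
      rw [← Matrix.toLin'_mul]
      have : (S⁻¹ : Matrix.symplecticGroup (Fin n) (Qk F k)).1 *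
          S.1 = 1 := by
        rw [← Submonoid.coe_mul, inv_mul_cancel, Submonoid.coe_one]
      rw [this, Matrix.toLin'_one])

noncomputable def PsiM (S : Matrix.symplecticGroup (Fin n) (Qk F k)) :
    Mmod F n k ≃ₗ[F] Mmod F n k :=
  (EE F n k ≪≫ₗ (eqOfS F n k S).restrictScalars F) ≪≫ₗ (EE F n k).symm

lemma PsiM_apply (S : Matrix.symplecticGroup (Fin n) (Qk F k)) (x : Mmod F n k) :
    PsiM F n k S x = (EE F n k).symm (S.1 *ᵥ (EE F n k x)) := by
  show (EE F n k).symm (Matrix.toLin' S.1 (EE F n k x)) = _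
  rw [Matrix.toLin'_apply]

lemma PsiM_mem (hk : 0 < k) (S : Matrix.symplecticGroup (Fin n) (Qk F k)) : PsiM F n k S ∈ GM F n k := by
  rw [mem_GM_iff]
  have hS : S.1ᵀ * (-(Matrix.J (Fin n) (Qk F k))) *
      S.1 = -(Matrix.J (Fin n) (Qk F k)) := by
    have h := (SymplecticGroup.mem_iff' ).mp S.2
    rw [Matrix.mul_neg, Matrix.neg_mul, h]
  constructor
  · intro x y
    rw [form_EE F n k hk, form_EE F n k hk]
    have e1 : EE F n k (PsiM F n k S x) = S.1 *ᵥ (EE F n k x) := by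
      rw [PsiM_apply, LinearEquiv.apply_symm_apply]
    have e2 : EE F n k (PsiM F n k S y) = S.1 *ᵥ (EE F n k y) := by
      rw [PsiM_apply, LinearEquiv.apply_symm_apply]
    rw [e1, e2, Bq_matrix, Bq_matrix, dot_transport, hS]
  · intro x
    have h1 : EE F n k ((fun i => hkT (x i)) : Mmod F n k) = epsQ F k • EE F n k x :=
      EE_T F n k x
    rw [PsiM_apply, PsiM_apply, h1]
    have h2 : S.1 *ᵥ (epsQ F k • EE F n k x)
        = epsQ F k • (S.1 *ᵥ EE F n k x) := by
      rw [Matrix.mulVec_smul]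
    rw [h2, EE_symm_T]

end Assemble

section Iso
variable (F : Type*) [Field F] (n k : ℕ)

lemma left_inv_PhiPsi (hk : 0 < k) (g : GM F n k) :
    (⟨PsiM F n k ⟨PhiM F n k g, PhiM_mem F n k hk g⟩,
      PsiM_mem F n k hk _⟩ : GM F n k) = g := by
  apply Subtype.ext
  apply LinearEquiv.toLinearMap_injective
  apply LinearMap.ext
  intro x
  show PsiM F n k ⟨PhiM F n k g, PhiM_mem F n k hk g⟩ x = g.1 x
  rw [PsiM_apply]
  have h1 : (⟨PhiM F n k g, PhiM_mem F n k hk g⟩ :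
      Matrix.symplecticGroup (Fin n) (Qk F k)).1 = PhiM F n k g := rfl
  rw [h1, PhiM_mulVec, conjE_apply, LinearEquiv.symm_apply_apply, LinearEquiv.symm_apply_apply]

lemma right_inv_PhiPsi (hk : 0 < k) (S : Matrix.symplecticGroup (Fin n) (Qk F k)) :
    (⟨PhiM F n k ⟨PsiM F n k S, PsiM_mem F n k hk S⟩,
      PhiM_mem F n k hk _⟩ : Matrix.symplecticGroup (Fin n) (Qk F k)) = S := by
  apply Subtype.ext
  show PhiM F n k ⟨PsiM F n k S, PsiM_mem F n k hk S⟩ = S.1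
  have key : (hQof F n k ⟨PsiM F n k S, PsiM_mem F n k hk S⟩).toLinearMap
      = Matrix.toLin' S.1 := by
    apply LinearMap.ext
    intro v
    show conjE F n k (PsiM F n k S) v = Matrix.toLin' S.1 v
    rw [conjE_apply, PsiM_apply, LinearEquiv.apply_symm_apply, LinearEquiv.apply_symm_apply,
      Matrix.toLin'_apply]
  rw [PhiM, key, LinearMap.toMatrix'_toLin']

lemma PhiM_mul (g h : GM F n k) :
    PhiM F n k (g * h) = PhiM F n k g * PhiM F n k h := by
  have key : (hQof F n k (g * h)).toLinearMap
      = (hQof F n k g).toLinearMap ∘ₗ (hQof F n k h).toLinearMap := by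
    apply LinearMap.ext
    intro v
    show conjE F n k (g * h).1 v = conjE F n k g.1 (conjE F n k h.1 v)
    rw [conjE_apply, conjE_apply, conjE_apply, LinearEquiv.symm_apply_apply]
    rfl
  rw [PhiM, key, LinearMap.toMatrix'_comp]
  rfl

noncomputable def isoM (hk : 0 < k) : GM F n k ≃* Matrix.symplecticGroup (Fin n) (Qk F k) where
  toFun g := ⟨PhiM F n k g, PhiM_mem F n k hk g⟩
  invFun S := ⟨PsiM F n k S, PsiM_mem F n k hk S⟩
  left_inv g := left_inv_PhiPsi F n k hk g
  right_inv S := right_inv_PhiPsi F n k hk S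
  map_mul' g h := by
    apply Subtype.ext
    exact PhiM_mul F n k g h

end Iso

/-- For the homogeneous snt-module `M = H_k ⊕ ⋯ ⊕ H_k`
(`n` copies), the group `Sp(M,t)` is isomorphic to `Sp_{2n}(F[t]/(t^k))`;
in particular, reduction modulo `t` induces a surjective group homomorphism
`π₀ : Sp(M,t) → Sp_{2n}(F)`. -/
theorem sp_homogeneous_snt_iso_symplectic {F : Type*} [Field F] [CharZero F]
    (n k : ℕ) (hk : 0 < k) :
    ∃ iso : (sntSp F (Fin n → (Fin k → F) × (Fin k → F))
        (fun x y => ∑ i, hkForm (x i) (y i)) (fun x i => hkT (x i))) ≃*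
        Matrix.symplecticGroup (Fin n) (Polynomial F ⧸ Ideal.span {(Polynomial.X : Polynomial F) ^ k}),
      Function.Surjective ((spMap (evalZeroQuot F k hk)).comp iso.toMonoidHom) := by
  refine ⟨isoM F n k hk, ?_⟩
  intro S
  let σ : F →+* (Polynomial F ⧸ Ideal.span {(X : Polynomial F) ^ k}) :=
    (Ideal.Quotient.mk (Ideal.span {(X : Polynomial F) ^ k})).comp
      (Polynomial.C : F →+* Polynomial F)
  refine ⟨(isoM F n k hk).symm (spMap σ S), ?_⟩
  rw [MonoidHom.comp_apply]
  have h1 : (isoM F n k hk).toMonoidHom ((isoM F n k hk).symm (spMap σ S)) = spMap σ S :=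
    (isoM F n k hk).apply_symm_apply _
  have h2 : (spMap (evalZeroQuot F k hk)) ((spMap σ) S) = S := by
    apply Subtype.ext
    apply Matrix.ext
    intro i j
    show evalZeroQuot F k hk (σ (S.1 i j)) = S.1 i j
    show evalZeroQuot F k hk ((Ideal.Quotient.mk (Ideal.span {(X : Polynomial F) ^ k}))
      (Polynomial.C (S.1 i j))) = S.1 i j
    rw [evalZeroQuot, Ideal.Quotient.lift_mk]
    simp
  exact (congrArg (spMap (evalZeroQuot F k hk)) h1).trans h2
end

section
/- Let M = M(l_1) ⊕ ⋯ ⊕ M(l_s) with l_1 > ⋯ > l_s be the decomposition of an snt-module into its homogeneous pieces, and let σ ∈ Sp(M,t) with components σ_j^i : M(l_i) → M(l_j). Then: (a) for all i < j and every v ∈ M(l_j), the component σ_i^j(v) lies in t^{l_i−l_j}·M(l_i); consequently the induced map M̄(l_j) → M̄(l_i) on the quotients modulo t is zero, so the induced block matrix of σ on M̄ = M/tM is block upper triangular; and (b) for each i, the induced map σ̄_i^i : M̄(l_i) → M̄(l_i) is a symplectic automorphism for the form ⟨ā, b̄⟩_i := ⟨a, t^{l_i−1}·b⟩. -/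
/-- The homogeneous piece `M(l) = H_l ⊕ ⋯ ⊕ H_l` (`r` copies), in coordinates. -/
abbrev HomPiece (F : Type*) [Field F] (l r : ℕ) := Fin r → (Fin l → F) × (Fin l → F)

/-- `t` acting on a homogeneous piece. -/
def tPiece {F : Type*} [Field F] {l r : ℕ} (v : HomPiece F l r) : HomPiece F l r :=
  fun a => hkT (v a)

/-- The snt-module `M = M(l_1) ⊕ ⋯ ⊕ M(l_s)` in coordinates, where `M(l_i)` consists
of `r i` copies of `H_{l i}`. -/
abbrev SntSum (F : Type*) [Field F] {s : ℕ} (l r : Fin s → ℕ) :=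
  (i : Fin s) → HomPiece F (l i) (r i)

/-- The symplectic form on `M = M(l_1) ⊕ ⋯ ⊕ M(l_s)`. -/
def sumForm {F : Type*} [Field F] {s : ℕ} {l r : Fin s → ℕ} (x y : SntSum F l r) : F :=
  ∑ i, ∑ a, hkForm (x i a) (y i a)

/-- The action of `t` on `M = M(l_1) ⊕ ⋯ ⊕ M(l_s)`. -/
def sumT {F : Type*} [Field F] {s : ℕ} {l r : Fin s → ℕ} (x : SntSum F l r) :
    SntSum F l r := fun i => tPiece (x i)

/-- The block component `σ_j^i : M(l_i) → M(l_j)` of an endomorphism `σ` of `M`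
(with the paper's indexing: `blockComp σ j i` maps the `i`-th piece to the `j`-th). -/
def blockComp {F : Type*} [Field F] {s : ℕ} {l r : Fin s → ℕ}
    (σ : SntSum F l r ≃ₗ[F] SntSum F l r) (j i : Fin s) (v : HomPiece F (l i) (r i)) :
    HomPiece F (l j) (r j) :=
  σ (Pi.single i v) j

/-- Reduction modulo `t` of a homogeneous piece: the constant coefficients. -/
def coeff0 {F : Type*} [Field F] {l r : ℕ} (h : 0 < l) (v : HomPiece F l r) :
    Fin r → F × F :=
  fun a => ((v a).1 ⟨0, h⟩, (v a).2 ⟨0, h⟩)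

/-- The canonical lift of an element of `M(l)/t·M(l)` to `M(l)` (constant coefficients). -/
def embed0 {F : Type*} [Field F] {l r : ℕ} (v : Fin r → F × F) : HomPiece F l r :=
  fun a => (fun m => if (m : ℕ) = 0 then (v a).1 else 0,
    fun m => if (m : ℕ) = 0 then (v a).2 else 0)

/-- The nondegenerate alternating form `⟨ā, b̄⟩ := ⟨a, t^{l-1}·b⟩` on `M(l)/t·M(l)`,
computed with the canonical lifts. -/
def barForm {F : Type*} [Field F] (l : ℕ) {r : ℕ} (v w : Fin r → F × F) : F :=
  ∑ a, hkForm (embed0 (l := l) v a) ((hkT^[l - 1]) (embed0 (l := l) w a))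

/-- The map `σ̄_i^i` induced on `M(l_i)/t·M(l_i)` by the diagonal block of `σ`. -/
def barMap {F : Type*} [Field F] {s : ℕ} {l r : Fin s → ℕ}
    (σ : SntSum F l r ≃ₗ[F] SntSum F l r) (i : Fin s) (h : 0 < l i)
    (v : Fin (r i) → F × F) : Fin (r i) → F × F :=
  coeff0 h (blockComp σ i i (embed0 v))
section Helpers
variable {F : Type*} [Field F]

lemma hkShift_iterate_apply {k : ℕ} (m : ℕ) (a : Fin k → F) (i : Fin k) :
    (hkShift^[m] a) i = if h : m ≤ (i : ℕ) then a ⟨(i : ℕ) - m, by have := i.isLt; omega⟩ else 0 := by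
  induction m generalizing a i with
  | zero => simp
  | succ n ih =>
    rw [Function.iterate_succ_apply']
    show (if h : (i:ℕ) = 0 then 0 else (hkShift^[n] a) ⟨(i : ℕ) - 1, by have := i.isLt; omega⟩) = _
    by_cases h0 : (i : ℕ) = 0
    · rw [dif_pos h0, dif_neg (by omega)]
    · rw [dif_neg h0, ih]
      by_cases h1 : n ≤ (i:ℕ) - 1
      · rw [dif_pos h1, dif_pos (by omega)]
        congr 1
        simp only [Fin.mk.injEq]
        omega
      · rw [dif_neg h1, dif_neg (by omega)]

lemma hkT_iterate {k : ℕ} (m : ℕ) (x : (Fin k → F) × (Fin k → F)) :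
    hkT^[m] x = (hkShift^[m] x.1, hkShift^[m] x.2) := by
  induction m generalizing x with
  | zero => rfl
  | succ n ih =>
    rw [Function.iterate_succ_apply, ih, Function.iterate_succ_apply,
      Function.iterate_succ_apply]
    rfl

lemma tPiece_iterate {l r : ℕ} (m : ℕ) (v : HomPiece F l r) :
    (tPiece (F := F))^[m] v = fun a => hkT^[m] (v a) := by
  induction m generalizing v with
  | zero => rfl
  | succ n ih =>
    rw [Function.iterate_succ_apply, ih]
    funext a
    rw [Function.iterate_succ_apply]
    rfl

lemma sumT_iterate {s : ℕ} {l r : Fin s → ℕ} (m : ℕ) (x : SntSum F l r) :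
    (sumT (F := F))^[m] x = fun i => (tPiece (F := F))^[m] (x i) := by
  induction m generalizing x with
  | zero => rfl
  | succ n ih =>
    rw [Function.iterate_succ_apply, ih]
    funext i
    rw [Function.iterate_succ_apply]
    rfl

lemma hkShift_pow_eq_zero {k : ℕ} {m : ℕ} (h : k ≤ m) (a : Fin k → F) :
    hkShift^[m] a = 0 := by
  funext i
  rw [hkShift_iterate_apply, dif_neg (by have := i.isLt; omega)]
  rfl

lemma tPiece_pow_eq_zero {l r : ℕ} {m : ℕ} (h : l ≤ m) (v : HomPiece F l r) :
    (tPiece (F := F))^[m] v = 0 := by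
  rw [tPiece_iterate]
  funext a
  rw [hkT_iterate, hkShift_pow_eq_zero h, hkShift_pow_eq_zero h]
  rfl

lemma exists_shift_preimage {k p : ℕ} (a : Fin k → F) (h : hkShift^[p] a = 0) :
    ∃ b : Fin k → F, a = hkShift^[k - p] b := by
  by_cases hkp : k ≤ p
  · exact ⟨a, by rw [Nat.sub_eq_zero_of_le hkp]; rfl⟩
  · push_neg at hkp
    refine ⟨fun j => if hj : (j:ℕ) + (k - p) < k then a ⟨(j:ℕ) + (k-p), hj⟩ else 0, ?_⟩
    funext i
    rw [hkShift_iterate_apply]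
    by_cases hi : k - p ≤ (i:ℕ)
    · rw [dif_pos hi, dif_pos (by simp only [Fin.val_mk]; have := i.isLt; omega)]
      congr 1
      exact Fin.ext (by simp only [Fin.val_mk]; have := i.isLt; omega)
    · rw [dif_neg hi]
      have h2 := congrFun h ⟨(i:ℕ) + p, by have := i.isLt; omega⟩
      rw [hkShift_iterate_apply, dif_pos (by simp only [Fin.val_mk]; omega)] at h2
      rw [show ((0:Fin k → F) ⟨(i:ℕ)+p, _⟩) = 0 from rfl] at h2
      rw [← h2]
      congr 1
      exact Fin.ext (by simp only [Fin.val_mk]; omega)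

lemma exists_hkT_preimage {k p : ℕ} (x : (Fin k → F) × (Fin k → F))
    (h : hkT^[p] x = 0) : ∃ y, x = hkT^[k - p] y := by
  rw [hkT_iterate] at h
  obtain ⟨b1, hb1⟩ := exists_shift_preimage x.1 (congrArg Prod.fst h)
  obtain ⟨b2, hb2⟩ := exists_shift_preimage x.2 (congrArg Prod.snd h)
  exact ⟨(b1, b2), by rw [hkT_iterate]; exact Prod.ext hb1 hb2⟩

lemma exists_tPiece_preimage {l r p : ℕ} (v : HomPiece F l r)
    (h : (tPiece (F := F))^[p] v = 0) : ∃ w, v = (tPiece (F := F))^[l - p] w := by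
  rw [tPiece_iterate] at h
  choose y hy using fun a => exists_hkT_preimage (v a) (congrFun h a)
  exact ⟨y, by rw [tPiece_iterate]; funext a; exact hy a⟩

end Helpers
section Helpers2
variable {F : Type*} [Field F]

lemma hkShift_zero {k : ℕ} : hkShift (0 : Fin k → F) = 0 := by
  funext i
  unfold hkShift
  split <;> rfl

lemma tPiece_zero {l r : ℕ} : tPiece (F := F) (0 : HomPiece F l r) = 0 := by
  funext a
  show hkT 0 = 0
  unfold hkT
  rw [show ((0 : (Fin l → F) × (Fin l → F)).1) = 0 from rfl,
    show ((0 : (Fin l → F) × (Fin l → F)).2) = 0 from rfl, hkShift_zero]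
  rfl

lemma tPiece_pow_zero {l r : ℕ} (m : ℕ) : (tPiece (F := F))^[m] (0 : HomPiece F l r) = 0 :=
  Function.iterate_fixed tPiece_zero m

lemma sumT_single {s : ℕ} {l r : Fin s → ℕ} (k : Fin s) (v : HomPiece F (l k) (r k)) :
    sumT (F := F) (Pi.single k v) = Pi.single k (tPiece v) := by
  funext j
  by_cases h : j = k
  · subst h; simp only [sumT, Pi.single_eq_same]
  · simp only [sumT, Pi.single_eq_of_ne h, tPiece_zero]

lemma sumT_iterate_single {s : ℕ} {l r : Fin s → ℕ} (m : ℕ) (k : Fin s)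
    (v : HomPiece F (l k) (r k)) :
    (sumT (F := F))^[m] (Pi.single k v) = Pi.single k ((tPiece (F := F))^[m] v) := by
  rw [sumT_iterate]
  funext j
  by_cases h : j = k
  · subst h; simp only [Pi.single_eq_same]
  · simp only [Pi.single_eq_of_ne h, tPiece_pow_zero]

/-- `coeff0` as an additive monoid hom. -/
def coeff0Add {l r : ℕ} (h : 0 < l) : HomPiece F l r →+ (Fin r → F × F) where
  toFun := coeff0 h
  map_zero' := rfl
  map_add' := fun _ _ => rfl

lemma coeff0_embed0 {l r : ℕ} (h : 0 < l) (v : Fin r → F × F) :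
    coeff0 (F := F) h (embed0 v) = v := by
  funext a
  show ((embed0 (l := l) v a).1 ⟨0, h⟩, (embed0 (l := l) v a).2 ⟨0, h⟩) = v a
  simp [embed0]

lemma embed0_zero {l r : ℕ} : embed0 (F := F) (l := l) (0 : Fin r → F × F) = 0 := by
  funext a
  unfold embed0
  refine Prod.ext ?_ ?_ <;> funext m <;> show (if (m:ℕ) = 0 then _ else 0) = (0:F) <;>
    split <;> rfl

lemma coeff0_tPiece {l r : ℕ} (h : 0 < l) (w : HomPiece F l r) :
    coeff0 (F := F) h (tPiece w) = 0 := by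
  funext a
  show ((hkT (w a)).1 ⟨0, h⟩, (hkT (w a)).2 ⟨0, h⟩) = 0
  show (hkShift (w a).1 ⟨0, h⟩, hkShift (w a).2 ⟨0, h⟩) = 0
  unfold hkShift
  rw [dif_pos rfl, dif_pos rfl]
  rfl

lemma coeff0_tPiece_pow {l r : ℕ} (h : 0 < l) {m : ℕ} (hm : 0 < m) (w : HomPiece F l r) :
    coeff0 (F := F) h ((tPiece (F := F))^[m] w) = 0 := by
  obtain ⟨n, rfl⟩ : ∃ n, m = n + 1 := ⟨m - 1, by omega⟩
  rw [Function.iterate_succ_apply', coeff0_tPiece]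

lemma exists_tPiece_of_coeff0_zero {l r : ℕ} (h : 0 < l) (v : HomPiece F l r)
    (hv : coeff0 (F := F) h v = 0) : ∃ w, v = tPiece (F := F) w := by
  have hz : (tPiece (F := F))^[l - 1] v = 0 := by
    rw [tPiece_iterate]
    funext a
    rw [hkT_iterate]
    have h1 : (v a).1 ⟨0, h⟩ = 0 := congrArg Prod.fst (congrFun hv a)
    have h2 : (v a).2 ⟨0, h⟩ = 0 := congrArg Prod.snd (congrFun hv a)
    have key : ∀ (b : Fin l → F), b ⟨0, h⟩ = 0 → hkShift^[l - 1] b = 0 := by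
      intro b hb
      funext i
      rw [hkShift_iterate_apply]
      by_cases hi : l - 1 ≤ (i : ℕ)
      · rw [dif_pos hi]
        have : (⟨(i : ℕ) - (l - 1), by have := i.isLt; omega⟩ : Fin l) = ⟨0, h⟩ :=
          Fin.ext (by simp only [Fin.val_mk]; have := i.isLt; omega)
        rw [this, hb]; rfl
      · rw [dif_neg hi]; rfl
    rw [key _ h1, key _ h2]
    rfl
  obtain ⟨w, hw⟩ := exists_tPiece_preimage v hz
  refine ⟨w, ?_⟩
  rw [hw, show l - (l - 1) = 1 from by omega, Function.iterate_one]

lemma hkForm_zero_left {k : ℕ} (y : (Fin k → F) × (Fin k → F)) : hkForm 0 y = 0 := by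
  unfold hkForm
  simp [show ∀ i : Fin k, (0 : (Fin k → F) × (Fin k → F)).1 i = 0 from fun _ => rfl,
    show ∀ i : Fin k, (0 : (Fin k → F) × (Fin k → F)).2 i = 0 from fun _ => rfl]

lemma hkForm_zero_right {k : ℕ} (y : (Fin k → F) × (Fin k → F)) : hkForm y 0 = 0 := by
  unfold hkForm
  simp [show ∀ i : Fin k, (0 : (Fin k → F) × (Fin k → F)).1 i = 0 from fun _ => rfl,
    show ∀ i : Fin k, (0 : (Fin k → F) × (Fin k → F)).2 i = 0 from fun _ => rfl]

lemma hkForm_top {k : ℕ} (hk : 0 < k) (x y : (Fin k → F) × (Fin k → F)) :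
    hkForm x (hkT^[k - 1] y) =
      x.1 ⟨0, hk⟩ * y.2 ⟨0, hk⟩ - y.1 ⟨0, hk⟩ * x.2 ⟨0, hk⟩ := by
  rw [hkT_iterate]
  unfold hkForm
  congr 1
  · rw [Fintype.sum_eq_single (⟨0, hk⟩ : Fin k)]
    · show x.1 _ * (hkShift^[k-1] y.2) (Fin.rev ⟨0, hk⟩) = _
      rw [hkShift_iterate_apply,
        dif_pos (by simp only [Fin.val_rev, Fin.val_mk]; omega)]
      congr 2
      refine congrArg _ (Fin.ext ?_)
      simp only [Fin.val_rev, Fin.val_mk]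
      omega
    · intro i hi
      show x.1 i * (hkShift^[k-1] y.2) (Fin.rev i) = 0
      rw [hkShift_iterate_apply, dif_neg ?_, mul_zero]
      simp only [Fin.val_rev]
      have h1 : (i : ℕ) ≠ 0 := fun h => hi (Fin.ext h)
      have := i.isLt
      omega
  · rw [Fintype.sum_eq_single (⟨k - 1, by omega⟩ : Fin k)]
    · show (hkShift^[k-1] y.1) _ * x.2 (Fin.rev ⟨k - 1, by omega⟩) = _
      rw [hkShift_iterate_apply, dif_pos (by simp only [Fin.val_mk]; omega)]
      congr 2
      · refine congrArg _ (Fin.ext ?_)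
        simp only [Fin.val_rev, Fin.val_mk]
        omega
      · refine congrArg _ (Fin.ext ?_)
        simp only [Fin.val_rev, Fin.val_mk]
        omega
    · intro i hi
      show (hkShift^[k-1] y.1) i * x.2 (Fin.rev i) = 0
      rw [hkShift_iterate_apply, dif_neg ?_, zero_mul]
      have h1 : (i : ℕ) ≠ k - 1 := fun h => hi (Fin.ext (by simp only [Fin.val_mk]; omega))
      have := i.isLt
      omega

lemma barForm_eq {k r' : ℕ} (hk : 0 < k) (v w : Fin r' → F × F) :
    barForm (F := F) k v w =
      ∑ a, ((v a).1 * (w a).2 - (w a).1 * (v a).2) := by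
  unfold barForm
  refine Finset.sum_congr rfl fun a _ => ?_
  rw [hkForm_top hk]
  simp [embed0]

lemma barForm_coeff0 {k r' : ℕ} (hk : 0 < k) (x y : HomPiece F k r') :
    barForm (F := F) k (coeff0 hk x) (coeff0 hk y) =
      ∑ a, hkForm (x a) (hkT^[k - 1] (y a)) := by
  rw [barForm_eq hk]
  refine Finset.sum_congr rfl fun a _ => ?_
  rw [hkForm_top hk]
  rfl

end Helpers2
section Helpers2b
variable {F : Type*} [Field F]

lemma hkT_pow_eq_zero {k m : ℕ} (h : k ≤ m) (z : (Fin k → F) × (Fin k → F)) :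
    hkT^[m] z = 0 := by
  rw [hkT_iterate, hkShift_pow_eq_zero h, hkShift_pow_eq_zero h]
  rfl

end Helpers2b
section Main
set_option synthInstance.maxHeartbeats 1000000
set_option maxHeartbeats 1000000
variable {F : Type*} [Field F] {s : ℕ} {l r : Fin s → ℕ}

lemma coeff0_sub {l' r' : ℕ} (h : 0 < l') (x y : HomPiece F l' r') :
    coeff0 (F := F) h (x - y) = coeff0 h x - coeff0 h y := rfl

lemma coeff0_add {l' r' : ℕ} (h : 0 < l') (x y : HomPiece F l' r') :
    coeff0 (F := F) h (x + y) = coeff0 h x + coeff0 h y := rfl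

lemma coeff0_sum {l' r' : ℕ} (h : 0 < l') {α : Type*} (t : Finset α)
    (f : α → HomPiece F l' r') :
    coeff0 (F := F) h (∑ k ∈ t, f k) = ∑ k ∈ t, coeff0 h (f k) := by
  classical
  induction t using Finset.cons_induction with
  | empty => rfl
  | cons a t ha ih => rw [Finset.sum_cons, Finset.sum_cons, coeff0_add, ih]

lemma linEquiv_map_sum (σ : SntSum F l r ≃ₗ[F] SntSum F l r) {α : Type*}
    (t : Finset α) (f : α → SntSum F l r) :
    σ (∑ k ∈ t, f k) = ∑ k ∈ t, σ (f k) := by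
  classical
  induction t using Finset.cons_induction with
  | empty => simpa using LinearEquiv.map_zero σ
  | cons a t ha ih => rw [Finset.sum_cons, Finset.sum_cons, LinearEquiv.map_add, ih]

lemma sigma_comm_iterate (σ : SntSum F l r ≃ₗ[F] SntSum F l r)
    (hσ : σ ∈ sntSp F (SntSum F l r) sumForm sumT) (m : ℕ) (x : SntSum F l r) :
    σ ((sumT (F := F))^[m] x) = (sumT (F := F))^[m] (σ x) := by
  induction m generalizing x with
  | zero => rfl
  | succ n ih =>
    rw [Function.iterate_succ_apply, ih, hσ.2 x, ← Function.iterate_succ_apply]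

lemma symm_mem (σ : SntSum F l r ≃ₗ[F] SntSum F l r)
    (hσ : σ ∈ sntSp F (SntSum F l r) sumForm sumT) :
    σ.symm ∈ sntSp F (SntSum F l r) sumForm sumT := by
  refine ⟨fun x y => ?_, fun x => ?_⟩
  · conv_rhs => rw [← σ.apply_symm_apply x, ← σ.apply_symm_apply y]
    rw [hσ.1]
  · conv_lhs => rw [← σ.apply_symm_apply x]
    rw [← hσ.2, σ.symm_apply_apply]

lemma partA (σ : SntSum F l r ≃ₗ[F] SntSum F l r)
    (hσ : σ ∈ sntSp F (SntSum F l r) sumForm sumT) (i j : Fin s)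
    (v : HomPiece F (l j) (r j)) :
    ∃ w, blockComp σ i j v = (tPiece (F := F))^[l i - l j] w := by
  have h1 : (sumT (F := F))^[l j] (Pi.single j v) = 0 := by
    rw [sumT_iterate_single, tPiece_pow_eq_zero le_rfl, Pi.single_zero]
  have h2 : (sumT (F := F))^[l j] (σ (Pi.single j v)) = 0 := by
    rw [← sigma_comm_iterate σ hσ, h1, LinearEquiv.map_zero]
  rw [sumT_iterate] at h2
  exact exists_tPiece_preimage (p := l j) _ (congrFun h2 i)

lemma partB1 (hl0 : ∀ i, 0 < l i) (hlt : ∀ i j : Fin s, i < j → l j < l i)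
    (σ : SntSum F l r ≃ₗ[F] SntSum F l r)
    (hσ : σ ∈ sntSp F (SntSum F l r) sumForm sumT) {i j : Fin s} (hij : i < j)
    (v : HomPiece F (l j) (r j)) :
    coeff0 (hl0 i) (blockComp σ i j v) = 0 := by
  obtain ⟨w, hw⟩ := partA σ hσ i j v
  rw [hw, coeff0_tPiece_pow _ (by have := hlt i j hij; omega)]

lemma blockComp_sub (σ : SntSum F l r ≃ₗ[F] SntSum F l r) (j i : Fin s)
    (v v' : HomPiece F (l i) (r i)) :
    blockComp σ j i (v - v') = blockComp σ j i v - blockComp σ j i v' := by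
  show σ (Pi.single i (v - v')) j = _
  rw [Pi.single_sub]
  exact congrFun (σ.toLinearMap.map_sub (Pi.single i v) (Pi.single i v')) j

lemma partDiag (hl0 : ∀ i, 0 < l i) (σ : SntSum F l r ≃ₗ[F] SntSum F l r)
    (hσ : σ ∈ sntSp F (SntSum F l r) sumForm sumT) (i : Fin s)
    (v v' : HomPiece F (l i) (r i)) (h : coeff0 (hl0 i) v = coeff0 (hl0 i) v') :
    coeff0 (hl0 i) (blockComp σ i i v) = coeff0 (hl0 i) (blockComp σ i i v') := by
  have hsub : coeff0 (hl0 i) (v - v') = 0 := by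
    rw [coeff0_sub, h, sub_self]
  obtain ⟨w, hw⟩ := exists_tPiece_of_coeff0_zero (hl0 i) _ hsub
  have key : coeff0 (hl0 i) (blockComp σ i i (v - v')) = 0 := by
    show coeff0 (hl0 i) (σ (Pi.single i (v - v')) i) = 0
    rw [hw, ← sumT_single, hσ.2]
    exact coeff0_tPiece _ _
  rw [blockComp_sub, coeff0_sub, sub_eq_zero] at key
  exact key

lemma partB2 (hl0 : ∀ i, 0 < l i) (hlt : ∀ i j : Fin s, i < j → l j < l i)
    (σ : SntSum F l r ≃ₗ[F] SntSum F l r)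
    (hσ : σ ∈ sntSp F (SntSum F l r) sumForm sumT) (i : Fin s)
    (v w : Fin (r i) → F × F) :
    barForm (l i) (barMap σ i (hl0 i) v) (barMap σ i (hl0 i) w) = barForm (l i) v w := by
  have step1 : barForm (l i) v w =
      sumForm (Pi.single i (embed0 (l := l i) v) : SntSum F l r)
        ((sumT (F := F))^[l i - 1] ((Pi.single i (embed0 (l := l i) w) : SntSum F l r))) := by
    rw [sumT_iterate_single]
    unfold sumForm
    rw [Fintype.sum_eq_single i]
    · simp only [Pi.single_eq_same]
      unfold barForm
      refine Finset.sum_congr rfl fun a _ => ?_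
      rw [tPiece_iterate]
    · intro k hk
      simp only [Pi.single_eq_of_ne hk]
      exact Finset.sum_eq_zero fun a _ => hkForm_zero_left _
  have step2 : sumForm (Pi.single i (embed0 (l := l i) v) : SntSum F l r)
        ((sumT (F := F))^[l i - 1] ((Pi.single i (embed0 (l := l i) w) : SntSum F l r)))
      = sumForm (σ (Pi.single i (embed0 (l := l i) v)))
        ((sumT (F := F))^[l i - 1] (σ (Pi.single i (embed0 (l := l i) w)))) := by
    rw [← sigma_comm_iterate σ hσ, hσ.1]
  have step3 : sumForm (σ (Pi.single i (embed0 (l := l i) v)))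
        ((sumT (F := F))^[l i - 1] (σ (Pi.single i (embed0 (l := l i) w))))
      = ∑ a, hkForm (σ (Pi.single i (embed0 (l := l i) v)) i a)
          (hkT^[l i - 1] (σ (Pi.single i (embed0 (l := l i) w)) i a)) := by
    unfold sumForm
    simp only [sumT_iterate, tPiece_iterate]
    rw [Fintype.sum_eq_single i]
    · intro k hk
      rcases lt_or_gt_of_ne hk with hki | hki
      · -- k < i
        obtain ⟨u', hu'⟩ := partA σ hσ k i (embed0 (l := l i) v)
        obtain ⟨u, hu⟩ := partA σ hσ k i (embed0 (l := l i) w)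
        refine Finset.sum_eq_zero fun a _ => ?_
        have e1 : σ (Pi.single i (embed0 (l := l i) v)) k
            = (tPiece (F := F))^[l k - l i] u' := hu'
        have e2 : σ (Pi.single i (embed0 (l := l i) w)) k
            = (tPiece (F := F))^[l k - l i] u := hu
        simp only [e1, e2, tPiece_iterate]
        rw [← Function.iterate_add_apply]
        have hm : (l i - 1) + (l k - l i) = l k - 1 := by
          have := hlt k i hki; have := hl0 i; omega
        rw [hm, hkForm_top (hl0 k)]
        have z0 : ∀ z : (Fin (l k) → F) × (Fin (l k) → F),
            (hkT^[l k - l i] z).1 ⟨0, hl0 k⟩ = 0 ∧ (hkT^[l k - l i] z).2 ⟨0, hl0 k⟩ = 0 := by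
          intro z
          rw [hkT_iterate]
          constructor <;>
          · show (hkShift^[l k - l i] _) _ = 0
            rw [hkShift_iterate_apply,
              dif_neg (by simp only [Fin.val_mk]; have := hlt k i hki; omega)]
        rw [(z0 _).1, (z0 _).2, zero_mul, mul_zero, sub_zero]
      · -- i < k
        refine Finset.sum_eq_zero fun a _ => ?_
        rw [hkT_pow_eq_zero (by have := hlt i k hki; omega)]
        exact hkForm_zero_right _
  have step4 : (∑ a, hkForm (σ (Pi.single i (embed0 (l := l i) v)) i a)
          (hkT^[l i - 1] (σ (Pi.single i (embed0 (l := l i) w)) i a)))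
      = barForm (l i) (barMap σ i (hl0 i) v) (barMap σ i (hl0 i) w) := by
    rw [← barForm_coeff0 (hl0 i)]
    rfl
  rw [← step4, ← step3, ← step2, ← step1]

lemma partInv (hl0 : ∀ i, 0 < l i) (hlt : ∀ i j : Fin s, i < j → l j < l i)
    (σ : SntSum F l r ≃ₗ[F] SntSum F l r)
    (hσ : σ ∈ sntSp F (SntSum F l r) sumForm sumT) (i : Fin s)
    (v : Fin (r i) → F × F) :
    barMap σ.symm i (hl0 i) (barMap σ i (hl0 i) v) = v := by
  classical
  have hτ := symm_mem σ hσ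
  set A : SntSum F l r := σ (Pi.single i (embed0 (l := l i) v)) with hA
  set E : SntSum F l r := fun k => embed0 (coeff0 (hl0 k) (A k)) with hE
  have hEk : ∀ k, E k = embed0 (coeff0 (hl0 k) (A k)) := fun k => by rw [hE]
  have hAE : ∀ k, ∃ wk, A k - E k = tPiece (F := F) wk := by
    intro k
    apply exists_tPiece_of_coeff0_zero (hl0 k)
    rw [coeff0_sub, hEk k, coeff0_embed0, sub_self]
  choose W hW using hAE
  have hAEW : A = E + sumT W := by
    funext k
    show A k = E k + sumT W k
    rw [show sumT (F := F) W k = tPiece (W k) from rfl, ← hW k]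
    abel
  have hkey : coeff0 (hl0 i) (σ.symm A i) = coeff0 (hl0 i) (σ.symm E i) := by
    rw [hAEW, LinearEquiv.map_add, hτ.2]
    show coeff0 (hl0 i) (σ.symm E i + sumT (σ.symm W) i) = _
    rw [show sumT (F := F) (σ.symm W) i = tPiece (σ.symm W i) from rfl,
      coeff0_add, coeff0_tPiece, add_zero]
  have lhs : coeff0 (hl0 i) (σ.symm A i) = v := by
    rw [hA, σ.symm_apply_apply, Pi.single_eq_same, coeff0_embed0]
  have rhs : coeff0 (hl0 i) (σ.symm E i) =
      barMap σ.symm i (hl0 i) (barMap σ i (hl0 i) v) := by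
    have hEsum : E = ∑ k, Pi.single k (E k) := (Finset.univ_sum_single E).symm
    rw [hEsum, linEquiv_map_sum σ.symm Finset.univ (fun k => Pi.single k (E k)),
      Finset.sum_apply, coeff0_sum (hl0 i)]
    rw [Fintype.sum_eq_single i]
    · show coeff0 (hl0 i) (blockComp σ.symm i i (E i)) = _
      rw [hEk i]
      rfl
    · intro k hk
      rcases lt_or_gt_of_ne hk with hki | hki
      · -- k < i
        have hAk : coeff0 (hl0 k) (A k) = 0 := partB1 hl0 hlt σ hσ hki (embed0 (l := l i) v)
        have hzero : E k = 0 := by rw [hEk k, hAk, embed0_zero]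
        rw [hzero, Pi.single_zero, LinearEquiv.map_zero]
        rfl
      · -- i < k
        exact partB1 hl0 hlt σ.symm hτ hki (E k)
  rw [← rhs, ← hkey, lhs]

end Main

/-- For `σ ∈ Sp(M,t)` with `M = M(l_1) ⊕ ⋯ ⊕ M(l_s)`,
`l_1 > ⋯ > l_s`: (a) for `i < j` the component `σ_i^j` takes values in
`t^{l_i - l_j}·M(l_i)`, so the induced block matrix modulo `t` is block upper
triangular; (b) each diagonal block descends to the quotient modulo `t` and
induces a symplectic automorphism `σ̄_i^i` of `(M̄(l_i), ⟨·,·⟩_i)`. -/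
theorem snt_block_triangular {F : Type*} [Field F] [CharZero F] {s : ℕ}
    (l r : Fin s → ℕ) (hl0 : ∀ i, 0 < l i)
    (hlt : ∀ i j : Fin s, i < j → l j < l i)
    (σ : SntSum F l r ≃ₗ[F] SntSum F l r)
    (hσ : σ ∈ sntSp F (SntSum F l r) sumForm sumT) :
    (∀ i j : Fin s, i < j → ∀ v : HomPiece F (l j) (r j),
      ∃ w : HomPiece F (l i) (r i),
        blockComp σ i j v = (tPiece (F := F) (l := l i) (r := r i))^[l i - l j] w) ∧
    (∀ i j : Fin s, i < j → ∀ v : HomPiece F (l j) (r j),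
      coeff0 (hl0 i) (blockComp σ i j v) = 0) ∧
    (∀ i : Fin s,
      (∀ v v' : HomPiece F (l i) (r i), coeff0 (hl0 i) v = coeff0 (hl0 i) v' →
        coeff0 (hl0 i) (blockComp σ i i v) = coeff0 (hl0 i) (blockComp σ i i v')) ∧
      (∀ v w : Fin (r i) → F × F,
        barForm (l i) (barMap σ i (hl0 i) v) (barMap σ i (hl0 i) w) = barForm (l i) v w) ∧
      Function.Bijective (barMap σ i (hl0 i))) := by
  refine ⟨fun i j hij v => partA σ hσ i j v,
    fun i j hij v => partB1 hl0 hlt σ hσ hij v,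
    fun i => ⟨fun v v' h => partDiag hl0 σ hσ i v v' h,
      fun v w => partB2 hl0 hlt σ hσ i v w, ?_⟩⟩
  exact Function.bijective_iff_has_inverse.mpr
    ⟨barMap σ.symm i (hl0 i), fun v => partInv hl0 hlt σ hσ i v,
      fun v => by
        have h := partInv hl0 hlt σ.symm (symm_mem σ hσ) i v
        rwa [σ.symm_symm] at h⟩
end

section
/- Let M be an snt-module with a fixed decomposition M = M_- ⊕ M_+ into t-stable Lagrangian subspaces, and let W ⊆ M_- be a t-stable subspace. Then for every U ∈ P_W the map ρ_U : W → M_+/W^⊥ is F[[t]]-linear and self-dual; conversely, for every F[[t]]-linear self-dual map ρ : W → M_+/W^⊥ there is a unique U ∈ P_W with ρ_U = ρ. Hence U ↦ ρ_U is a bijection from P_W onto F_W. -/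
variable {F M : Type*} [Field F] [AddCommGroup M] [Module F M]

section AuxLemmas
variable {F M : Type*} [Field F] [AddCommGroup M] [Module F M]

lemma aux_skew (B : M →ₗ[F] M →ₗ[F] F) (halt : ∀ x : M, B x x = 0) (x y : M) :
    B y x = - B x y := by
  have h := halt (x + y)
  simp only [map_add, LinearMap.add_apply] at h
  rw [halt x, halt y] at h
  linear_combination h

lemma aux_refl (B : M →ₗ[F] M →ₗ[F] F) (halt : ∀ x : M, B x x = 0) :
    LinearMap.BilinForm.IsRefl B := fun x y h => by rw [aux_skew B halt x y, h, neg_zero]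

lemma aux_biperp [FiniteDimensional F M]
    (B : M →ₗ[F] M →ₗ[F] F) (halt : ∀ x : M, B x x = 0)
    (hnd : ∀ x : M, (∀ y : M, B x y = 0) → x = 0)
    (Mm Mp : Submodule F M) (hcompl : IsCompl Mm Mp)
    (hMmi : ∀ x ∈ Mm, ∀ y ∈ Mm, B x y = 0)
    (W : Submodule F M) (hW : W ≤ Mm) (w₁ : M) (hw₁ : w₁ ∈ Mm)
    (h : ∀ p ∈ Mp, (∀ w ∈ W, B w p = 0) → B w₁ p = 0) : w₁ ∈ W := by
  have hnd' : LinearMap.BilinForm.Nondegenerate B :=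
    (LinearMap.IsRefl.nondegenerate_iff_separatingLeft (aux_refl B halt)).2 hnd
  rw [← LinearMap.BilinForm.orthogonal_orthogonal hnd' (aux_refl B halt) W]
  rw [LinearMap.BilinForm.mem_orthogonal_iff]
  intro y hy
  set ym := ((Mm.linearProjOfIsCompl Mp hcompl) y : M) with hym
  set yp := ((Mp.linearProjOfIsCompl Mm hcompl.symm) y : M) with hyp
  have hsum : ym + yp = y := Submodule.projection_add_projection_eq_self hcompl y
  have hymM : ym ∈ Mm := ((Mm.linearProjOfIsCompl Mp hcompl) y).2
  have hypM : yp ∈ Mp := ((Mp.linearProjOfIsCompl Mm hcompl.symm) y).2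
  have hyW : ∀ w ∈ W, B w yp = 0 := by
    intro w hw
    have h1 : B w y = 0 := LinearMap.BilinForm.mem_orthogonal_iff.1 hy w hw
    have h2 : B w ym = 0 := hMmi w (hW hw) ym hymM
    rw [← hsum, map_add] at h1
    simpa [h2] using h1
  have h3 : B w₁ yp = 0 := h yp hypM hyW
  have h4 : B w₁ ym = 0 := hMmi w₁ hw₁ ym hymM
  show B y w₁ = 0
  rw [aux_skew B halt w₁ y, ← hsum, map_add]
  simp [h3, h4]

end AuxLemmas



/-- A Lagrangian subspace: isotropic of dimension `(dim M)/2`. -/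
def IsLagrangian (B : M →ₗ[F] M →ₗ[F] F) (U : Submodule F M) : Prop :=
  (∀ x ∈ U, ∀ y ∈ U, B x y = 0) ∧ 2 * Module.finrank F U = Module.finrank F M

/-- `π₋(U) = W`: the projection of `U` along `M₊` is exactly `W` (stated without
constructing the projection: every `u ∈ U` differs from some `w ∈ W` by an element
of `M₊`, and conversely). -/
def ProjEq (Mp : Submodule F M) (U W : Submodule F M) : Prop :=
  (∀ u ∈ U, ∃ w ∈ W, u - w ∈ Mp) ∧ (∀ w ∈ W, ∃ u ∈ U, u - w ∈ Mp)

/-- `W^⊥ = {x ∈ M₊ | ⟨w, x⟩ = 0 for all w ∈ W}`, as a submodule of `M₊`. -/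
def perpIn (B : M →ₗ[F] M →ₗ[F] F) (Mp W : Submodule F M) : Submodule F Mp where
  carrier := {x | ∀ w ∈ W, B w (x : M) = 0}
  zero_mem' := by intro w hw; simp
  add_mem' := by
    intro x y hx hy w hw
    simp only [Submodule.coe_add, map_add]
    rw [hx w hw, hy w hw, add_zero]
  smul_mem' := by
    intro c x hx w hw
    simp only [Submodule.coe_smul, map_smul]
    rw [hx w hw, smul_zero]

/-- Self-duality of `ρ : W → M₊/W^⊥`, expressed via arbitrary lifts:
`⟨w, ρ w'⟩ = ⟨w', ρ w⟩`. -/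
def SelfDualMap (B : M →ₗ[F] M →ₗ[F] F) (Mp W : Submodule F M)
    (ρ : W →ₗ[F] (Mp ⧸ perpIn B Mp W)) : Prop :=
  ∀ (w w' : W) (m m' : Mp), Submodule.Quotient.mk m = ρ w' →
    Submodule.Quotient.mk m' = ρ w → B w (m : M) = B w' (m' : M)

/-- `ρ = ρ_U`: `U` is the graph `{w + m | w ∈ W, m ∈ M₊, [m] = ρ(w)}`. -/
def Corresponds (B : M →ₗ[F] M →ₗ[F] F) (Mp W : Submodule F M) (U : Submodule F M)
    (ρ : W →ₗ[F] (Mp ⧸ perpIn B Mp W)) : Prop :=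
  ∀ x : M, x ∈ U ↔ ∃ w : W, ∃ m : Mp,
    x = (w : M) + (m : M) ∧ Submodule.Quotient.mk m = ρ w

/-- `F[[t]]`-linearity of `ρ : W → M₊/W^⊥` (commutation with `t`), expressed via lifts:
whenever `[m] = ρ(w)`, also `[t·m] = ρ(t·w)`. -/
def TLinearMapTo (B : M →ₗ[F] M →ₗ[F] F) (t : M →ₗ[F] M) (Mp W : Submodule F M)
    (htW : ∀ x ∈ W, t x ∈ W) (htMp : ∀ x ∈ Mp, t x ∈ Mp)
    (ρ : W →ₗ[F] (Mp ⧸ perpIn B Mp W)) : Prop :=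
  ∀ (w : W) (m : Mp), Submodule.Quotient.mk m = ρ w →
    Submodule.Quotient.mk (⟨t (m : M), htMp _ m.2⟩ : Mp) = ρ ⟨t (w : M), htW _ w.2⟩

/-- Let `M = M₋ ⊕ M₊` be a decomposition of an snt-module into
`t`-stable Lagrangian subspaces and `W ⊆ M₋` a `t`-stable subspace. Then `U ↦ ρ_U`
is a bijection from `P_W` (the `t`-stable Lagrangians `U` with `π₋(U) = W`) onto
`F_W` (the `F[[t]]`-linear self-dual maps `W → M₊/W^⊥`). -/
theorem t_lagrangian_graph_bijection {F M : Type*} [Field F] [CharZero F]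
    [AddCommGroup M] [Module F M] [FiniteDimensional F M]
    (B : M →ₗ[F] M →ₗ[F] F) (halt : ∀ x : M, B x x = 0)
    (hnd : ∀ x : M, (∀ y : M, B x y = 0) → x = 0)
    (t : M →ₗ[F] M) (hnilp : ∃ N : ℕ, 0 < N ∧ t ^ N = 0)
    (hsd : ∀ x y : M, B (t x) y = B x (t y))
    (Mm Mp : Submodule F M) (hcompl : IsCompl Mm Mp)
    (hMm : IsLagrangian B Mm) (hMp : IsLagrangian B Mp)
    (htMm : ∀ x ∈ Mm, t x ∈ Mm) (htMp : ∀ x ∈ Mp, t x ∈ Mp)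
    (W : Submodule F M) (hW : W ≤ Mm) (htW : ∀ x ∈ W, t x ∈ W) :
    (∀ U : Submodule F M, (∀ x ∈ U, t x ∈ U) → IsLagrangian B U → ProjEq Mp U W →
      ∃ ρ : W →ₗ[F] (Mp ⧸ perpIn B Mp W),
        SelfDualMap B Mp W ρ ∧ TLinearMapTo B t Mp W htW htMp ρ ∧
        Corresponds B Mp W U ρ ∧
        ∀ ρ' : W →ₗ[F] (Mp ⧸ perpIn B Mp W), Corresponds B Mp W U ρ' → ρ' = ρ) ∧
    (∀ ρ : W →ₗ[F] (Mp ⧸ perpIn B Mp W),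
      SelfDualMap B Mp W ρ → TLinearMapTo B t Mp W htW htMp ρ →
      ∃! U : Submodule F M, ((∀ x ∈ U, t x ∈ U) ∧ IsLagrangian B U ∧ ProjEq Mp U W) ∧
        Corresponds B Mp W U ρ) := by
    classical
  have hskew := aux_skew B halt
  have hrefl : LinearMap.BilinForm.IsRefl B := aux_refl B halt
  have hnd' : LinearMap.BilinForm.Nondegenerate B :=
    (LinearMap.IsRefl.nondegenerate_iff_separatingLeft hrefl).2 hnd
  set πm := Mm.linearProjOfIsCompl Mp hcompl with hπmdef
  set πp := Mp.linearProjOfIsCompl Mm hcompl.symm with hπpdef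
  have hdec : ∀ x : M, (πm x : M) + (πp x : M) = x :=
    Submodule.projection_add_projection_eq_self hcompl
  have hspec : ∀ w m : M, (hw : w ∈ Mm) → (hm : m ∈ Mp) →
      πm (w + m) = ⟨w, hw⟩ ∧ πp (w + m) = ⟨m, hm⟩ := by
    intro w m hw hm
    constructor
    · have h1 : πm w = ⟨w, hw⟩ := Submodule.linearProjOfIsCompl_apply_left hcompl ⟨w, hw⟩
      have h2 : πm m = 0 := Submodule.projectionOnto_apply_of_mem_right hcompl hm
      rw [map_add, h1, h2, add_zero]
    · have h1 : πp m = ⟨m, hm⟩ := Submodule.linearProjOfIsCompl_apply_left hcompl.symm ⟨m, hm⟩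
      have h2 : πp w = 0 := Submodule.projectionOnto_apply_of_mem_right hcompl.symm hw
      rw [map_add, h1, h2, zero_add]
  constructor
  · -- Part 1
    intro U htU hUL hUP
    obtain ⟨hUiso, hUdim⟩ := hUL
    obtain ⟨hUP1, hUP2⟩ := hUP
    have hUorth : LinearMap.BilinForm.orthogonal B U = U := by
      refine (Submodule.eq_of_le_of_finrank_le
        (fun x hx => LinearMap.BilinForm.mem_orthogonal_iff.2 fun n hn => hUiso n hn x hx) ?_).symm
      rw [LinearMap.BilinForm.finrank_orthogonal hnd' U]
      have := Submodule.finrank_le U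
      omega
    have hperpU : ∀ x : M, x ∈ Mp → (∀ w ∈ W, B w x = 0) → x ∈ U := by
      intro x hxp hxw
      rw [← hUorth]
      refine LinearMap.BilinForm.mem_orthogonal_iff.2 fun u hu => ?_
      obtain ⟨w, hw, hm⟩ := hUP1 u hu
      show B u x = 0
      have e1 : B w x = 0 := hxw w hw
      have e2 : B (u - w) x = 0 := hMp.1 _ hm x hxp
      rw [map_sub, LinearMap.sub_apply] at e2
      linear_combination e1 + e2
    have hπmU : ∀ u : U, (πm (u : M) : M) ∈ W := by
      intro u
      obtain ⟨w, hw, hm⟩ := hUP1 u u.2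
      have hu : (u : M) = w + ((u : M) - w) := by abel
      rw [hu, (hspec w _ (hW hw) hm).1]
      exact hw
    let g : U →ₗ[F] W := LinearMap.codRestrict W (Mm.subtype ∘ₗ πm ∘ₗ U.subtype) fun u => hπmU u
    let f : U →ₗ[F] (Mp ⧸ perpIn B Mp W) := (perpIn B Mp W).mkQ ∘ₗ πp ∘ₗ U.subtype
    have hg : ∀ u : U, (g u : M) = (πm (u : M) : M) := fun u => rfl
    have hf : ∀ u : U, f u = Submodule.Quotient.mk (πp (u : M)) := fun u => rfl
    have hgsurj : Function.Surjective g := by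
      intro w
      obtain ⟨u, hu, hum⟩ := hUP2 w w.2
      refine ⟨⟨u, hu⟩, Subtype.ext ?_⟩
      rw [hg]
      show (πm u : M) = (w : M)
      have h2 : πm u = ⟨(w : M), hW w.2⟩ := by
        conv_lhs => rw [show u = (w : M) + (u - (w : M)) by abel]
        exact (hspec _ _ (hW w.2) hum).1
      rw [h2]
    have hkerf : ∀ u u' : U, g u = g u' → f u = f u' := by
      have key : ∀ v : U, g v = 0 → f v = 0 := by
        intro v hv
        have hvp : (v : M) ∈ Mp := by
          have h0 : πm (v : M) = 0 := by
            have := congrArg (Subtype.val) hv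
            rw [hg] at this
            exact Subtype.ext this
          exact (Submodule.linearProjOfIsCompl_apply_eq_zero_iff hcompl).1 h0
        have hvW : ∀ w ∈ W, B w (v : M) = 0 := by
          intro w hw
          obtain ⟨u', hu', hdiff⟩ := hUP2 w hw
          have h0 : B u' (v : M) = 0 := hUiso u' hu' v v.2
          have h1 : B (u' - w) (v : M) = 0 := hMp.1 _ hdiff _ hvp
          rw [map_sub, LinearMap.sub_apply] at h1
          linear_combination h0 - h1
        rw [hf]
        rw [Submodule.Quotient.mk_eq_zero]
        have h2 : πp (v : M) = ⟨(v : M), hvp⟩ :=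
          Submodule.linearProjOfIsCompl_apply_left hcompl.symm ⟨v, hvp⟩
        rw [h2]
        exact fun w hw => hvW w hw
      intro u u' hgu
      have h3 := key (u - u') (by rw [map_sub, hgu, sub_self])
      rw [map_sub] at h3
      exact sub_eq_zero.1 h3
    obtain ⟨s, hs⟩ := g.exists_rightInverse_of_surjective (LinearMap.range_eq_top.2 hgsurj)
    set ρ := f ∘ₗ s with hρdef
    have hρg : ∀ u : U, ρ (g u) = f u := by
      intro u
      apply hkerf
      show g (s (g u)) = g u
      rw [← LinearMap.comp_apply, hs, LinearMap.id_apply]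
    have hkey : ∀ (w : W) (m : Mp),
        Submodule.Quotient.mk m = ρ w ↔ (w : M) + (m : M) ∈ U := by
      intro w m
      constructor
      · intro h
        obtain ⟨u, hu⟩ := hgsurj w
        set mq := πp ((u : U) : M) with hmq
        have hρw : ρ w = Submodule.Quotient.mk mq := by rw [← hu, hρg, hf]
        have hmem : ((m : M) - (mq : M)) ∈ Mp := sub_mem m.2 mq.2
        have hperp : ∀ w' ∈ W, B w' ((m : M) - (mq : M)) = 0 := by
          have h4 : (m : Mp) - mq ∈ perpIn B Mp W := by
            rw [← Submodule.Quotient.eq]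
            rw [h, hρw]
          intro w' hw'
          exact h4 w' hw'
        have hin : ((m : M) - (mq : M)) ∈ U := hperpU _ hmem hperp
        have hu_dec : (u : M) = (w : M) + (mq : M) := by
          conv_lhs => rw [← hdec (u : M)]
          rw [← hmq]
          have h9 : (πm (u : M) : M) = (w : M) := by rw [← hg, hu]
          rw [h9]
        have h5 : (w : M) + (m : M) = (u : M) + ((m : M) - (mq : M)) := by
          rw [hu_dec]; abel
        rw [h5]
        exact U.add_mem u.2 hin
      · intro h
        have h6 := hρg ⟨_, h⟩
        have h7 : g ⟨_, h⟩ = w := by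
          apply Subtype.ext
          rw [hg]
          show (πm ((w : M) + (m : M)) : M) = (w : M)
          rw [(hspec _ _ (hW w.2) m.2).1]
        rw [h7, hf] at h6
        have h8 : πp ((⟨(w : M) + (m : M), h⟩ : U) : M) = m := (hspec _ _ (hW w.2) m.2).2
        rw [h8] at h6
        exact h6.symm
    refine ⟨ρ, ?_, ?_, ?_, ?_⟩
    · intro w w' m m' h1 h2
      have hu1 : (w' : M) + (m : M) ∈ U := (hkey w' m).1 h1
      have hu2 : (w : M) + (m' : M) ∈ U := (hkey w m').1 h2
      have h0 : B ((w : M) + (m' : M)) ((w' : M) + (m : M)) = 0 := hUiso _ hu2 _ hu1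
      have e1 : B (w : M) (w' : M) = 0 := hMm.1 _ (hW w.2) _ (hW w'.2)
      have e2 : B (m' : M) (m : M) = 0 := hMp.1 _ m'.2 _ m.2
      have e3 : B (m' : M) (w' : M) = - B (w' : M) (m' : M) := hskew _ _
      simp only [map_add, LinearMap.add_apply] at h0
      linear_combination h0 - e1 - e2 - e3
    · intro w m h
      have h1 := (hkey w m).1 h
      have h2 : t ((w : M) + (m : M)) ∈ U := htU _ h1
      rw [map_add] at h2
      exact (hkey ⟨t (w : M), htW _ w.2⟩ ⟨t (m : M), htMp _ m.2⟩).2 h2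
    · intro x
      constructor
      · intro hx
        refine ⟨⟨(πm x : M), hπmU ⟨x, hx⟩⟩, πp x, (hdec x).symm, ?_⟩
        have h10 := hρg ⟨x, hx⟩
        have hgx : g ⟨x, hx⟩ = ⟨(πm x : M), hπmU ⟨x, hx⟩⟩ := Subtype.ext (hg ⟨x, hx⟩)
        rw [hgx, hf] at h10
        exact h10.symm
      · rintro ⟨w, m, rfl, hm⟩
        exact (hkey w m).1 hm
    · intro ρ' hcorr
      apply LinearMap.ext
      intro w
      obtain ⟨u, hu⟩ := hgsurj w
      obtain ⟨w'', m'', hdecu, hm''⟩ := (hcorr (u : M)).1 u.2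
      have hw'' : w'' = w := by
        apply Subtype.ext
        have h1 : (πm (u : M) : M) = (w'' : M) := by
          rw [hdecu, (hspec _ _ (hW w''.2) m''.2).1]
        have h2 : (πm (u : M) : M) = (w : M) := by rw [← hg, hu]
        rw [← h1, h2]
      have hρ'' : ρ w'' = Submodule.Quotient.mk m'' :=
        ((hkey w'' m'').2 (hdecu ▸ u.2)).symm
      rw [← hw'', ← hm'', hρ'']
  · -- Part 2
    intro ρ hsdρ htρ
    let U : Submodule F M :=
      { carrier := {x | ∃ w : W, ∃ m : Mp,
          x = (w : M) + (m : M) ∧ Submodule.Quotient.mk m = ρ w}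
        zero_mem' := ⟨0, 0, by simp, by simp⟩
        add_mem' := by
          rintro x y ⟨w, m, rfl, hm⟩ ⟨w', m', rfl, hm'⟩
          refine ⟨w + w', m + m', by push_cast; abel, ?_⟩
          rw [map_add, ← hm, ← hm']
          rfl
        smul_mem' := by
          rintro c x ⟨w, m, rfl, hm⟩
          refine ⟨c • w, c • m, by push_cast; module, ?_⟩
          rw [map_smul, ← hm]
          rfl }
    have hmemU : ∀ x : M, x ∈ U ↔ ∃ w : W, ∃ m : Mp,
        x = (w : M) + (m : M) ∧ Submodule.Quotient.mk m = ρ w := fun x => Iff.rfl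
    have hUiso : ∀ x ∈ U, ∀ y ∈ U, B x y = 0 := by
      rintro x ⟨w, m, rfl, hm⟩ y ⟨w', m', rfl, hm'⟩
      have e0 : B (w : M) (m' : M) = B (w' : M) (m : M) := hsdρ w w' m' m hm' hm
      have e1 : B (w : M) (w' : M) = 0 := hMm.1 _ (hW w.2) _ (hW w'.2)
      have e2 : B (m : M) (m' : M) = 0 := hMp.1 _ m.2 _ m'.2
      have e3 : B (m : M) (w' : M) = - B (w' : M) (m : M) := hskew _ _
      simp only [map_add, LinearMap.add_apply]
      linear_combination e0 + e1 + e2 + e3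
    have htUs : ∀ x ∈ U, t x ∈ U := by
      rintro x ⟨w, m, rfl, hm⟩
      exact ⟨⟨t (w : M), htW _ w.2⟩, ⟨t (m : M), htMp _ m.2⟩, by rw [map_add], htρ w m hm⟩
    have horth : LinearMap.BilinForm.orthogonal B U = U := by
      apply le_antisymm
      · intro x hx
        have hxU : ∀ u ∈ U, B u x = 0 := fun u hu =>
          LinearMap.BilinForm.mem_orthogonal_iff.1 hx u hu
        set w₁ := πm x with hw₁def
        set m₁ := πp x with hm₁def
        have hdx : (w₁ : M) + (m₁ : M) = x := hdec x
        have hw₁W : (w₁ : M) ∈ W := by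
          refine aux_biperp B halt hnd Mm Mp hcompl hMm.1 W hW _ w₁.2 ?_
          intro p hp hpw
          have hpU : p ∈ U := ⟨0, ⟨p, hp⟩, by simp, by
            rw [map_zero]
            exact (Submodule.Quotient.mk_eq_zero _).2 fun w hw => hpw w hw⟩
          have h0 : B p x = 0 := hxU p hpU
          rw [← hdx, map_add] at h0
          have h1 : B p (m₁ : M) = 0 := hMp.1 _ hp _ m₁.2
          have h2 : B ((w₁ : M)) p = - B p (w₁ : M) := hskew _ _
          linear_combination h2 - h0 + h1
        obtain ⟨m₁', hm₁'⟩ := Submodule.Quotient.mk_surjective (perpIn B Mp W)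
          (ρ ⟨(w₁ : M), hw₁W⟩)
        have hkey2 : ∀ w : W, B (w : M) ((m₁ : M) - (m₁' : M)) = 0 := by
          intro w
          obtain ⟨m, hm⟩ := Submodule.Quotient.mk_surjective (perpIn B Mp W) (ρ w)
          have huU : (w : M) + (m : M) ∈ U := ⟨w, m, rfl, hm⟩
          have h0 : B ((w : M) + (m : M)) x = 0 := hxU _ huU
          rw [← hdx] at h0
          simp only [map_add, LinearMap.add_apply] at h0
          have e1 : B (w : M) (w₁ : M) = 0 := hMm.1 _ (hW w.2) _ w₁.2
          have e2 : B (m : M) (m₁ : M) = 0 := hMp.1 _ m.2 _ m₁.2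
          have e3 : B (w : M) (m₁' : M) = B (w₁ : M) (m : M) :=
            hsdρ w ⟨(w₁ : M), hw₁W⟩ m₁' m hm₁' hm
          have e4 : B (m : M) (w₁ : M) = - B (w₁ : M) (m : M) := hskew _ _
          rw [map_sub]
          linear_combination h0 - e1 - e2 - e3 - e4
        have hq : Submodule.Quotient.mk m₁ = ρ ⟨(w₁ : M), hw₁W⟩ := by
          rw [← hm₁', Submodule.Quotient.eq]
          intro w hw
          simpa using hkey2 ⟨w, hw⟩
        exact ⟨⟨(w₁ : M), hw₁W⟩, m₁, hdx.symm, hq⟩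
      · intro x hx
        exact LinearMap.BilinForm.mem_orthogonal_iff.2 fun n hn => hUiso n hn x hx
    have hdim : 2 * Module.finrank F U = Module.finrank F M := by
      have h1 := LinearMap.BilinForm.finrank_orthogonal hnd' U
      rw [horth] at h1
      have h2 := Submodule.finrank_le U
      omega
    have hproj : ProjEq Mp U W := by
      constructor
      · rintro u ⟨w, m, rfl, hm⟩
        exact ⟨w, w.2, by simpa using m.2⟩
      · intro w hw
        obtain ⟨m, hm⟩ := Submodule.Quotient.mk_surjective (perpIn B Mp W) (ρ ⟨w, hw⟩)
        exact ⟨w + m, ⟨⟨w, hw⟩, m, rfl, hm⟩, by simpa using m.2⟩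
    refine ⟨U, ⟨⟨htUs, ⟨hUiso, hdim⟩, hproj⟩, fun x => Iff.rfl⟩, ?_⟩
    rintro U' ⟨-, hcorr'⟩
    ext x
    rw [hcorr' x]
    exact (hmemU x).symm
end

section
/- Let x ∈ M_- ⊗_F V, let e_1, …, e_m be a quasi-basis of the F[[t]]-module Im f_x, and let v_1, …, v_m ∈ V[[t]] satisfy f_x(v_i) = e_i for i = 1, …, m. Then the F[[t]]-span L of v_1, …, v_m is a primitive submodule of V[[t]], and L is a free F[[t]]-module with basis v_1, …, v_m. -/
set_option maxHeartbeats 1000000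
set_option synthInstance.maxHeartbeats 400000


open TensorProduct

/-- Let `x ∈ M₋ ⊗_F V`, let `e₁, …, e_m` be a quasi-basis of the
`F[[t]]`-module `Im f_x`, and let `v₁, …, v_m ∈ V[[t]]` satisfy `f_x(vᵢ) = eᵢ`.
Then the `F[[t]]`-span of `v₁, …, v_m` is a primitive submodule of `V[[t]]` and is
free with basis `v₁, …, v_m`.

Here `M₋` is a finite-dimensional `F`-vector space with a nilpotent action of `t`
(an `F[[t]]`-module), `V[[t]] = F[[t]] ⊗_F V`, and `f_x` is the `F[[t]]`-linear map
`V[[t]] → M₋` determined by `x` and the nondegenerate symmetric form on `V`;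
`f_x` is specified here by its characterizing properties. -/
theorem primitive_span_of_quasi_basis_preimage {F : Type*} [Field F] [CharZero F]
    {M : Type*} [AddCommGroup M] [Module F M] [Module (PowerSeries F) M]
    [IsScalarTower F (PowerSeries F) M] [FiniteDimensional F M]
    (hnilp : ∃ N : ℕ, ∀ u : M, ((PowerSeries.X : PowerSeries F) ^ N) • u = 0)
    {V : Type*} [AddCommGroup V] [Module F V] [FiniteDimensional F V]
    (BV : V →ₗ[F] V →ₗ[F] F) (hsymm : ∀ v w : V, BV v w = BV w v)
    (hnd : ∀ v : V, (∀ w : V, BV v w = 0) → v = 0)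
    -- `f_x`, characterized by additivity and its values on simple tensors
    (fx : (M ⊗[F] V) → ((PowerSeries F ⊗[F] V) →ₗ[PowerSeries F] M))
    (hfx_add : ∀ x y : M ⊗[F] V, fx (x + y) = fx x + fx y)
    (hfx_val : ∀ (u : M) (v : V) (b : PowerSeries F) (w : V),
      fx (u ⊗ₜ[F] v) (b ⊗ₜ[F] w) = (b * algebraMap F (PowerSeries F) (BV v w)) • u)
    (x : M ⊗[F] V) {m : ℕ} (e : Fin m → M)
    -- `e` is a quasi-basis of `Im f_x`
    (he_ne : ∀ i, e i ≠ 0)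
    (he_mem : ∀ i, e i ∈ LinearMap.range (fx x))
    (he_span : ∀ y ∈ LinearMap.range (fx x),
      ∃ a : Fin m → PowerSeries F, y = ∑ i, a i • e i)
    (he_rel : ∀ a : Fin m → PowerSeries F, (∑ i, a i • e i) = 0 → ∀ i, a i • e i = 0)
    (v : Fin m → PowerSeries F ⊗[F] V) (hv : ∀ i, fx x (v i) = e i) :
    (∃ L' : Submodule (PowerSeries F) (PowerSeries F ⊗[F] V),
      IsCompl (Submodule.span (PowerSeries F) (Set.range v)) L') ∧
    (∀ a : Fin m → PowerSeries F, (∑ i, a i • v i) = 0 → ∀ i, a i = 0) := by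
  classical
  set L : Submodule (PowerSeries F) (PowerSeries F ⊗[F] V) :=
    Submodule.span (PowerSeries F) (Set.range v) with hL
  -- If `d • e i = 0` then `X ∣ d`.
  have hdvd : ∀ (d : PowerSeries F) (i : Fin m), d • e i = 0 →
      (PowerSeries.X : PowerSeries F) ∣ d := by
    intro d i hd
    rw [PowerSeries.X_dvd_iff]
    by_contra h
    obtain ⟨u, rfl⟩ : IsUnit d :=
      PowerSeries.isUnit_iff_constantCoeff.2 (isUnit_iff_ne_zero.2 h)
    apply he_ne i
    calc e i = ((↑u⁻¹ * ↑u : PowerSeries F)) • e i := by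
          rw [u.inv_mul, one_smul]
      _ = (↑u⁻¹ : PowerSeries F) • ((u : PowerSeries F) • e i) := by rw [mul_smul]
      _ = 0 := by rw [hd, smul_zero]
  have hXne : (PowerSeries.X : PowerSeries F) ≠ 0 := PowerSeries.X_ne_zero
  have hcancel : ∀ w : PowerSeries F ⊗[F] V,
      (PowerSeries.X : PowerSeries F) • w = 0 → w = 0 := by
    intro w hw
    rcases smul_eq_zero.1 hw with h | h
    · exact absurd h hXne
    · exact h
  -- Applying `fx x` to a relation
  have happly : ∀ (a : Fin m → PowerSeries F) (w : PowerSeries F ⊗[F] V),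
      (∑ i, a i • v i) = w → (∑ i, a i • e i) = fx x w := by
    intro a w hw
    rw [← hw, map_sum]
    exact Finset.sum_congr rfl fun i _ => by rw [map_smul, hv]
  -- Step for linear independence
  have hstep : ∀ a : Fin m → PowerSeries F, (∑ i, a i • v i) = 0 →
      ∃ b : Fin m → PowerSeries F, (∑ i, b i • v i) = 0 ∧
        ∀ i, a i = PowerSeries.X * b i := by
    intro a ha
    have h0 : (∑ i, a i • e i) = 0 := by
      rw [happly a 0 ha, map_zero]
    have hXd : ∀ i, (PowerSeries.X : PowerSeries F) ∣ a i :=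
      fun i => hdvd (a i) i (he_rel a h0 i)
    choose b hb using hXd
    refine ⟨b, ?_, hb⟩
    apply hcancel
    rw [Finset.smul_sum, ← ha]
    exact Finset.sum_congr rfl fun i _ => by rw [hb i, mul_smul]
  -- Linear independence
  have hindep : ∀ a : Fin m → PowerSeries F, (∑ i, a i • v i) = 0 → ∀ i, a i = 0 := by
    have hcoeff : ∀ (n : ℕ) (a : Fin m → PowerSeries F), (∑ i, a i • v i) = 0 →
        ∀ i, PowerSeries.coeff (R := F) n (a i) = 0 := by
      intro n
      induction n with
      | zero =>
        intro a ha i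
        have h0 : (∑ j, a j • e j) = 0 := by rw [happly a 0 ha, map_zero]
        have hX := hdvd (a i) i (he_rel a h0 i)
        rw [PowerSeries.coeff_zero_eq_constantCoeff]
        exact PowerSeries.X_dvd_iff.1 hX
      | succ n ih =>
        intro a ha i
        obtain ⟨b, hb0, hb⟩ := hstep a ha
        rw [hb i, PowerSeries.coeff_succ_X_mul]
        exact ih b hb0 i
    intro a ha i
    ext n
    rw [hcoeff n a ha i, map_zero]
  refine ⟨?_, hindep⟩
  -- Saturation with respect to X
  have hmemL : ∀ w : PowerSeries F ⊗[F] V, w ∈ L ↔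
      ∃ c : Fin m → PowerSeries F, (∑ i, c i • v i) = w := by
    intro w
    exact Submodule.mem_span_range_iff_exists_fun (PowerSeries F)
  have hXsat : ∀ w : PowerSeries F ⊗[F] V,
      (PowerSeries.X : PowerSeries F) • w ∈ L → w ∈ L := by
    intro w hw
    obtain ⟨c, hc⟩ := (hmemL _).1 hw
    have hfw : (∑ i, c i • e i) = (PowerSeries.X : PowerSeries F) • fx x w := by
      rw [happly c _ hc]
      exact (fx x).map_smul PowerSeries.X w
    obtain ⟨d, hd⟩ := he_span (fx x w) ⟨w, rfl⟩
    have hrel : (∑ i, (PowerSeries.X * d i - c i) • e i) = 0 := by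
      have : ∑ i, (PowerSeries.X * d i - c i) • e i =
          (PowerSeries.X : PowerSeries F) • (∑ i, d i • e i) - ∑ i, c i • e i := by
        rw [Finset.smul_sum, ← Finset.sum_sub_distrib]
        exact Finset.sum_congr rfl fun i _ => by rw [sub_smul, mul_smul]
      rw [this, ← hd, hfw, sub_self]
    have hXdc : ∀ i, (PowerSeries.X : PowerSeries F) ∣ c i := by
      intro i
      have h1 : (PowerSeries.X : PowerSeries F) ∣ (PowerSeries.X * d i - c i) :=
        hdvd _ i (he_rel _ hrel i)
      have h2 : (PowerSeries.X : PowerSeries F) ∣ PowerSeries.X * d i := ⟨d i, rfl⟩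
      simpa using (dvd_sub h2 h1)
    choose c' hc' using hXdc
    have hwL : w = ∑ i, c' i • v i := by
      have : (PowerSeries.X : PowerSeries F) • (w - ∑ i, c' i • v i) = 0 := by
        rw [smul_sub, ← hc, Finset.smul_sum, ← Finset.sum_sub_distrib]
        apply Finset.sum_eq_zero
        intro i _
        rw [hc' i, mul_smul, sub_self]
      have := hcancel _ this
      exact (sub_eq_zero.1 this)
    rw [hwL]
    exact Submodule.sum_smul_mem L _ fun i _ => Submodule.subset_span ⟨i, rfl⟩
  -- Saturation: `a • w ∈ L`, `a ≠ 0` implies `w ∈ L`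
  have hsat : ∀ (n : ℕ) (a : PowerSeries F), PowerSeries.coeff (R := F) n a ≠ 0 →
      ∀ w : PowerSeries F ⊗[F] V, a • w ∈ L → w ∈ L := by
    intro n
    induction n with
    | zero =>
      intro a ha w hw
      obtain ⟨u, rfl⟩ : IsUnit a := PowerSeries.isUnit_iff_constantCoeff.2
        (isUnit_iff_ne_zero.2 (by rwa [PowerSeries.coeff_zero_eq_constantCoeff] at ha))
      have : w = (↑u⁻¹ : PowerSeries F) • ((u : PowerSeries F) • w) := by
        rw [← mul_smul, u.inv_mul, one_smul]
      rw [this]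
      exact Submodule.smul_mem L _ hw
    | succ n ih =>
      intro a ha w hw
      by_cases h0 : PowerSeries.constantCoeff (R := F) a = 0
      · obtain ⟨b, rfl⟩ := PowerSeries.X_dvd_iff.2 h0
        have hb : PowerSeries.coeff (R := F) n b ≠ 0 := by
          rwa [PowerSeries.coeff_succ_X_mul] at ha
        have : b • w ∈ L := hXsat _ (by rw [← mul_smul]; exact hw)
        exact ih b hb w this
      · obtain ⟨u, rfl⟩ : IsUnit a := PowerSeries.isUnit_iff_constantCoeff.2
          (isUnit_iff_ne_zero.2 h0)
        have : w = (↑u⁻¹ : PowerSeries F) • ((u : PowerSeries F) • w) := by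
          rw [← mul_smul, u.inv_mul, one_smul]
        rw [this]
        exact Submodule.smul_mem L _ hw
  -- The quotient is finite and torsion-free over the PID `F[[X]]`, hence free.
  haveI : Module.Finite (PowerSeries F) (PowerSeries F ⊗[F] V) :=
    Module.Finite.base_change F (PowerSeries F) V
  haveI : Module.Finite (PowerSeries F) ((PowerSeries F ⊗[F] V) ⧸ L) :=
    Module.Finite.of_surjective L.mkQ (Submodule.mkQ_surjective L)
  haveI : NoZeroSMulDivisors (PowerSeries F) ((PowerSeries F ⊗[F] V) ⧸ L) := by
    constructor
    intro a q hq
    by_cases ha : a = 0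
    · exact Or.inl ha
    · right
      obtain ⟨w, rfl⟩ := Submodule.mkQ_surjective L q
      obtain ⟨n, hn⟩ : ∃ n, PowerSeries.coeff (R := F) n a ≠ 0 := by
        by_contra h
        push_neg at h
        exact ha (PowerSeries.ext fun n => by rw [h n, map_zero])
      have hmem : a • w ∈ L := by
        have h1 : L.mkQ (a • w) = 0 := by rw [map_smul, hq]
        rwa [Submodule.mkQ_apply, Submodule.Quotient.mk_eq_zero] at h1
      rw [Submodule.mkQ_apply, Submodule.Quotient.mk_eq_zero]
      exact hsat n a hn w hmem
  haveI : Module.Free (PowerSeries F) ((PowerSeries F ⊗[F] V) ⧸ L) :=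
    Module.free_of_finite_type_torsion_free'
  -- Split the quotient map to get a complement.
  obtain ⟨s, hs⟩ := Module.projective_lifting_property L.mkQ
    (LinearMap.id : ((PowerSeries F ⊗[F] V) ⧸ L) →ₗ[PowerSeries F] _)
    (Submodule.mkQ_surjective L)
  have hproj : ∀ w : PowerSeries F ⊗[F] V, w - s (L.mkQ w) ∈ L := by
    intro w
    rw [← Submodule.Quotient.mk_eq_zero L]
    have : L.mkQ (w - s (L.mkQ w)) = 0 := by
      rw [map_sub]
      have : L.mkQ (s (L.mkQ w)) = L.mkQ w := by
        have := congrArg (fun f => f (L.mkQ w)) hs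
        simpa using this
      rw [this, sub_self]
    simpa using this
  set f : (PowerSeries F ⊗[F] V) →ₗ[PowerSeries F] L :=
    (LinearMap.id - s ∘ₗ L.mkQ).codRestrict L (fun w => by simpa using hproj w) with hf
  have hfproj : ∀ z : L, f z = z := by
    intro z
    apply Subtype.ext
    have hz : L.mkQ (z : PowerSeries F ⊗[F] V) = 0 := by
      rw [Submodule.mkQ_apply, Submodule.Quotient.mk_eq_zero]
      exact z.2
    have hfz : (f z : PowerSeries F ⊗[F] V) =
        (z : PowerSeries F ⊗[F] V) - s (L.mkQ (z : PowerSeries F ⊗[F] V)) := rfl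
    rw [hfz, hz, map_zero, sub_zero]
  exact ⟨LinearMap.ker f, LinearMap.isCompl_of_proj hfproj⟩
end

section
/- Let x ∈ M_- ⊗_F V and let e_1, …, e_m be a quasi-basis of the F[[t]]-module Im f_x. Then there exist w_1, …, w_m ∈ V[[t]] such that: (1) the F[[t]]-span of w_1, …, w_m is a primitive submodule of V[[t]] which is free with basis w_1, …, w_m; and (2) x = e_1 ⊗ w_1 + ⋯ + e_m ⊗ w_m under the identification M_- ⊗_F V = M_- ⊗_{F[[t]]} V[[t]]. In particular x ∈ (Im f_x) ⊗_{F[[t]]} V[[t]]. -/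
open TensorProduct

private lemma snt_map_sum {A B ι : Type*} [AddCommMonoid A] [AddCommGroup B]
    (g : A → B) (hg : ∀ x y, g (x + y) = g x + g y) (s : Finset ι) (f : ι → A) :
    g (∑ i ∈ s, f i) = ∑ i ∈ s, g (f i) := by
  classical
  have h0 : g 0 = 0 := by
    have := hg 0 0
    rw [add_zero] at this
    exact (left_eq_add.mp this)
  induction s using Finset.cons_induction with
  | empty => simpa using h0
  | cons a s ha ih => rw [Finset.sum_cons, hg, ih, Finset.sum_cons]

private lemma snt_decomp {F : Type*} [Field F] {M V : Type*} [AddCommGroup M] [Module F M]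
    [AddCommGroup V] [Module F V] {n : ℕ} (b : Module.Basis (Fin n) F V) (x : M ⊗[F] V) :
    ∃ u : Fin n → M, x = ∑ j, u j ⊗ₜ[F] b j := by
  induction x with
  | zero => exact ⟨0, by simp⟩
  | tmul u v =>
    refine ⟨fun j => b.repr v j • u, ?_⟩
    have : ∀ j, (b.repr v j • u) ⊗ₜ[F] b j = u ⊗ₜ[F] (b.repr v j • b j) := fun j => by
      rw [TensorProduct.smul_tmul]
    rw [Finset.sum_congr rfl (fun j _ => this j), ← TensorProduct.tmul_sum, b.sum_repr v]
  | add y z hy hz =>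
    obtain ⟨u1, h1⟩ := hy
    obtain ⟨u2, h2⟩ := hz
    exact ⟨u1 + u2, by simp [h1, h2, TensorProduct.add_tmul, Finset.sum_add_distrib]⟩

private lemma snt_ccoeff_zero {F : Type*} [Field F] {M : Type*} [AddCommGroup M]
    [Module (PowerSeries F) M] {a : PowerSeries F} {y : M} (h : a • y = 0) (hy : y ≠ 0) :
    PowerSeries.constantCoeff (R := F) a = 0 := by
  by_contra hc
  have hu : IsUnit a := PowerSeries.isUnit_iff_constantCoeff.mpr (isUnit_iff_ne_zero.mpr hc)
  obtain ⟨v, rfl⟩ := hu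
  refine hy ?_
  calc y = ((v⁻¹ : (PowerSeries F)ˣ) * v : (PowerSeries F)ˣ) • y := by
        rw [inv_mul_cancel]; exact (one_smul _ y).symm
    _ = (v⁻¹ : (PowerSeries F)ˣ) • ((v : PowerSeries F) • y) := by
        rw [Units.smul_def, Units.smul_def, Units.val_mul, mul_smul]
    _ = 0 := by rw [h, smul_zero]

set_option maxHeartbeats 1600000 in
/-- Let `x ∈ M₋ ⊗_F V` and let `e₁, …, e_m` be a quasi-basis of
`Im f_x`. Then there exist `w₁, …, w_m ∈ V[[t]]` such that the `F[[t]]`-span of the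
`wᵢ` is a primitive submodule of `V[[t]]`, free with basis `w₁, …, w_m`, and
`x = e₁ ⊗ w₁ + ⋯ + e_m ⊗ w_m` under the canonical identification
`M₋ ⊗_F V = M₋ ⊗_{F[[t]]} V[[t]]` (the identification `ψ` is specified by its
characterizing properties). In particular `x ∈ (Im f_x) ⊗_{F[[t]]} V[[t]]`. -/
theorem snt_tensor_normal_form {F : Type*} [Field F] [CharZero F]
    {M : Type*} [AddCommGroup M] [Module F M] [Module (PowerSeries F) M]
    [IsScalarTower F (PowerSeries F) M] [FiniteDimensional F M]
    (hnilp : ∃ N : ℕ, ∀ u : M, ((PowerSeries.X : PowerSeries F) ^ N) • u = 0)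
    {V : Type*} [AddCommGroup V] [Module F V] [FiniteDimensional F V]
    (BV : V →ₗ[F] V →ₗ[F] F) (hsymm : ∀ v w : V, BV v w = BV w v)
    (hnd : ∀ v : V, (∀ w : V, BV v w = 0) → v = 0)
    -- `f_x`, characterized by additivity and its values on simple tensors
    (fx : (M ⊗[F] V) → ((PowerSeries F ⊗[F] V) →ₗ[PowerSeries F] M))
    (hfx_add : ∀ x y : M ⊗[F] V, fx (x + y) = fx x + fx y)
    (hfx_val : ∀ (u : M) (v : V) (b : PowerSeries F) (w : V),
      fx (u ⊗ₜ[F] v) (b ⊗ₜ[F] w) = (b * algebraMap F (PowerSeries F) (BV v w)) • u)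
    -- the canonical identification `M ⊗_F V = M ⊗_{F[[t]]} (F[[t]] ⊗_F V)`
    (ψ : (M ⊗[F] V) → (M ⊗[PowerSeries F] (PowerSeries F ⊗[F] V)))
    (hψ_add : ∀ x y : M ⊗[F] V, ψ (x + y) = ψ x + ψ y)
    (hψ_val : ∀ (u : M) (v : V),
      ψ (u ⊗ₜ[F] v) = u ⊗ₜ[PowerSeries F] ((1 : PowerSeries F) ⊗ₜ[F] v))
    (x : M ⊗[F] V) {m : ℕ} (e : Fin m → M)
    -- `e` is a quasi-basis of `Im f_x`
    (he_ne : ∀ i, e i ≠ 0)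
    (he_mem : ∀ i, e i ∈ LinearMap.range (fx x))
    (he_span : ∀ y ∈ LinearMap.range (fx x),
      ∃ a : Fin m → PowerSeries F, y = ∑ i, a i • e i)
    (he_rel : ∀ a : Fin m → PowerSeries F, (∑ i, a i • e i) = 0 → ∀ i, a i • e i = 0) :
    ∃ w : Fin m → PowerSeries F ⊗[F] V,
      (∃ L' : Submodule (PowerSeries F) (PowerSeries F ⊗[F] V),
        IsCompl (Submodule.span (PowerSeries F) (Set.range w)) L') ∧
      (∀ a : Fin m → PowerSeries F, (∑ i, a i • w i) = 0 → ∀ i, a i = 0) ∧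
      ψ x = ∑ i, e i ⊗ₜ[PowerSeries F] w i := by
  classical
  -- basis of V, and decomposition of x
  set n := Module.finrank F V with hn
  set b : Module.Basis (Fin n) F V := Module.finBasis F V with hb
  obtain ⟨u, hu⟩ := snt_decomp b x
  -- the F[[t]]-basis of F[[t]] ⊗ V
  set β : Module.Basis (Fin n) (PowerSeries F) ((PowerSeries F) ⊗[F] V) := Algebra.TensorProduct.basis (PowerSeries F) b with hβ
  have hβ_apply : ∀ k, β k = (1 : (PowerSeries F)) ⊗ₜ[F] b k := fun k => Algebra.TensorProduct.basis_apply b k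
  -- value of fx x on 1 ⊗ v
  have hfx_sum : fx x = ∑ j, fx (u j ⊗ₜ[F] b j) := by
    rw [hu]; exact snt_map_sum fx hfx_add _ _
  have hval : ∀ v : V, fx x ((1 : (PowerSeries F)) ⊗ₜ[F] v) = ∑ j, algebraMap F (PowerSeries F) (BV (b j) v) • u j := by
    intro v
    rw [hfx_sum]
    rw [LinearMap.sum_apply]
    refine Finset.sum_congr rfl fun j _ => ?_
    rw [hfx_val, one_mul]
  -- dual basis
  have hndB : LinearMap.BilinForm.Nondegenerate BV :=
    ⟨hnd, fun v h => hnd v (fun w => by rw [hsymm]; exact h w)⟩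
  set b' : Module.Basis (Fin n) F V := LinearMap.BilinForm.dualBasis BV hndB b with hb'
  have hu_mem : ∀ k, u k ∈ LinearMap.range (fx x) := by
    intro k
    refine ⟨(1 : (PowerSeries F)) ⊗ₜ[F] b' k, ?_⟩
    rw [hval]
    have : ∀ j, BV (b j) (b' k) = if j = k then 1 else 0 := by
      intro j
      rw [hsymm]
      exact LinearMap.BilinForm.apply_dualBasis_left hndB b k j
    simp [this, apply_ite (algebraMap F (PowerSeries F))]
  have hrange_le : ∀ y ∈ LinearMap.range (fx x),
      y ∈ Submodule.span (PowerSeries F) (Set.range u) := by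
    rintro y ⟨z, rfl⟩
    have hz : z = ∑ k, β.repr z k • β k := (β.sum_repr z).symm
    rw [hz, map_sum]
    refine Submodule.sum_mem _ fun k _ => ?_
    rw [map_smul]
    refine Submodule.smul_mem _ _ ?_
    rw [hβ_apply, hval]
    exact Submodule.sum_mem _ fun j _ =>
      Submodule.smul_mem _ _ (Submodule.subset_span ⟨j, rfl⟩)
  -- coefficients c and d
  have hc' : ∀ k, ∃ cf : Fin m → (PowerSeries F), u k = ∑ i, cf i • e i := fun k => he_span _ (hu_mem k)
  choose c hc using hc'
  have hd' : ∀ i, ∃ df : Fin n → (PowerSeries F), ∑ k, df k • u k = e i := fun i =>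
    (Submodule.mem_span_range_iff_exists_fun (PowerSeries F)).mp (hrange_le _ (he_mem i))
  choose d hd using hd'
  -- D̄ C̄ = 1
  have hDC : ∀ i i', (∑ k, PowerSeries.constantCoeff (R := F) (d i k) *
      PowerSeries.constantCoeff (R := F) (c k i')) = if i = i' then 1 else 0 := by
    intro i i'
    set a : Fin m → (PowerSeries F) := fun j => (∑ k, d i k * c k j) - (if i = j then 1 else 0) with ha
    have hrel : ∑ j, a j • e j = 0 := by
      have h1 : ∑ j, (∑ k, d i k * c k j) • e j = e i := by
        calc ∑ j, (∑ k, d i k * c k j) • e j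
            = ∑ j, ∑ k, (d i k * c k j) • e j := by
              refine Finset.sum_congr rfl fun j _ => ?_
              rw [Finset.sum_smul]
          _ = ∑ k, ∑ j, (d i k * c k j) • e j := Finset.sum_comm
          _ = ∑ k, d i k • u k := by
              refine Finset.sum_congr rfl fun k _ => ?_
              rw [hc k, Finset.smul_sum]
              refine Finset.sum_congr rfl fun j _ => ?_
              rw [smul_smul]
          _ = e i := hd i
      have h2 : ∑ j, (if i = j then (1 : (PowerSeries F)) else 0) • e j = e i := by
        simp [ite_smul]
      simp only [ha, sub_smul, Finset.sum_sub_distrib, h1, h2, sub_self]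
    have hz : ∀ j, PowerSeries.constantCoeff (R := F) (a j) = 0 := fun j =>
      snt_ccoeff_zero (he_rel a hrel j) (he_ne j)
    have := hz i'
    simp only [ha, map_sub, map_sum, map_mul, sub_eq_zero] at this
    rw [this]
    split <;> simp
  -- the vectors w
  set w : Fin m → (PowerSeries F) ⊗[F] V := fun i => ∑ k, c k i • β k with hw
  -- the matrix A
  set A : Matrix (Fin m) (Fin m) (PowerSeries F) := Matrix.of fun i i' =>
    ∑ k, algebraMap F (PowerSeries F) (PowerSeries.constantCoeff (R := F) (d i k)) * c k i' with hA
  have hAcc : A.map (PowerSeries.constantCoeff (R := F)) = 1 := by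
    ext i i'
    simp only [Matrix.map_apply, hA, Matrix.of_apply, map_sum, map_mul]
    have : ∀ k, PowerSeries.constantCoeff (R := F)
        (algebraMap F (PowerSeries F) (PowerSeries.constantCoeff (R := F) (d i k))) =
        PowerSeries.constantCoeff (R := F) (d i k) := by
      intro k
      rw [PowerSeries.algebraMap_apply]
      simp
    rw [Finset.sum_congr rfl fun k _ => by rw [this k]]
    rw [hDC i i']
    simp [Matrix.one_apply]
  have hAdet : IsUnit A.det := by
    rw [PowerSeries.isUnit_iff_constantCoeff]
    have : (PowerSeries.constantCoeff (R := F) : (PowerSeries F) →+* F) A.det =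
        (A.map (PowerSeries.constantCoeff (R := F))).det := RingHom.map_det _ _
    rw [this, hAcc, Matrix.det_one]
    exact isUnit_one
  have hBA : A⁻¹ * A = 1 := Matrix.nonsing_inv_mul A hAdet
  -- linear maps g, h, s
  set g : ((PowerSeries F) ⊗[F] V) →ₗ[(PowerSeries F)] (Fin m → (PowerSeries F)) := LinearMap.pi (fun i =>
    ∑ k, algebraMap F (PowerSeries F) (PowerSeries.constantCoeff (R := F) (d i k)) • β.coord k) with hg
  set hmap : ((PowerSeries F) ⊗[F] V) →ₗ[(PowerSeries F)] (Fin m → (PowerSeries F)) :=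
    (Matrix.mulVecLin A⁻¹).comp g with hhmap
  have hrepr : ∀ j k, β.repr (w j) k = c k j := by
    intro j k
    rw [hw]
    have := β.repr_sum_self (fun k => c k j)
    exact congrFun this k
  have hg_w : ∀ j, g (w j) = fun i => A i j := by
    intro j
    funext i
    simp only [hg, LinearMap.pi_apply, LinearMap.sum_apply, LinearMap.smul_apply,
      Module.Basis.coord_apply, hrepr, smul_eq_mul, hA, Matrix.of_apply]
  have hh_w : ∀ j, hmap (w j) = Pi.single j 1 := by
    intro j
    rw [hhmap, LinearMap.comp_apply, hg_w]
    funext i'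
    simp only [Matrix.mulVecLin_apply, Matrix.mulVec, dotProduct]
    have : ∑ i, A⁻¹ i' i * A i j = (A⁻¹ * A) i' j := (Matrix.mul_apply).symm
    rw [this, hBA, Matrix.one_apply, Pi.single_apply]
  have hs_key : ∀ a : Fin m → (PowerSeries F), hmap (∑ i, a i • w i) = a := by
    intro a
    rw [map_sum]
    funext i'
    have h1 : ∀ i, hmap (a i • w i) = a i • (Pi.single i 1 : Fin m → PowerSeries F) :=
      fun i => by rw [map_smul, hh_w i]
    rw [Finset.sum_congr rfl fun i _ => h1 i]
    simp only [Finset.sum_apply, Pi.smul_apply, Pi.single_apply, smul_eq_mul,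
      mul_ite, mul_one, mul_zero]
    simp
  refine ⟨w, ?_, ?_, ?_⟩
  · -- primitivity
    set p : Submodule (PowerSeries F) ((PowerSeries F) ⊗[F] V) := Submodule.span (PowerSeries F) (Set.range w) with hp
    set s : (Fin m → (PowerSeries F)) →ₗ[(PowerSeries F)] ((PowerSeries F) ⊗[F] V) :=
      ∑ i, (LinearMap.proj i).smulRight (w i) with hs
    have hs_apply : ∀ a : Fin m → (PowerSeries F), s a = ∑ i, a i • w i := by
      intro a
      simp [hs, LinearMap.sum_apply]
    have hmem : ∀ z, s (hmap z) ∈ p := by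
      intro z
      rw [hs_apply]
      exact Submodule.sum_mem _ fun i _ =>
        Submodule.smul_mem _ _ (Submodule.subset_span ⟨i, rfl⟩)
    set f : ((PowerSeries F) ⊗[F] V) →ₗ[(PowerSeries F)] p := LinearMap.codRestrict p (s.comp hmap) hmem with hf
    have hproj : ∀ z : p, f z = z := by
      rintro ⟨z, hz⟩
      obtain ⟨a, ha⟩ := (Submodule.mem_span_range_iff_exists_fun (PowerSeries F)).mp hz
      apply Subtype.ext
      show s (hmap z) = z
      rw [← ha, hs_key, hs_apply]
    exact ⟨LinearMap.ker f, LinearMap.isCompl_of_proj hproj⟩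
  · -- independence
    intro a ha i
    have := hs_key a
    rw [ha, map_zero] at this
    exact (congrFun this i).symm
  · -- the identity ψ x = ∑ e i ⊗ w i
    have hψ_sum : ψ x = ∑ k, u k ⊗ₜ[(PowerSeries F)] ((1 : (PowerSeries F)) ⊗ₜ[F] b k) := by
      rw [hu, snt_map_sum ψ hψ_add]
      exact Finset.sum_congr rfl fun k _ => hψ_val _ _
    rw [hψ_sum]
    calc ∑ k, u k ⊗ₜ[(PowerSeries F)] ((1 : (PowerSeries F)) ⊗ₜ[F] b k)
        = ∑ k, ∑ i, e i ⊗ₜ[(PowerSeries F)] (c k i • β k) := by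
          refine Finset.sum_congr rfl fun k _ => ?_
          rw [hc k, sum_tmul]
          refine Finset.sum_congr rfl fun i _ => ?_
          rw [smul_tmul, hβ_apply]
      _ = ∑ i, e i ⊗ₜ[(PowerSeries F)] w i := by
          rw [Finset.sum_comm]
          refine Finset.sum_congr rfl fun i _ => ?_
          rw [hw, tmul_sum]
end

section
/- Let k_1 ≥ k_2 ≥ ⋯ ≥ k_m ≥ 1 be integers, and let L_1 and L_2 be primitive submodules of V[[t]] which are free F[[t]]-modules with bases a_1, …, a_m and b_1, …, b_m respectively. Suppose (a_i, a_j) ≡ (b_i, b_j) mod t^{min(k_i, k_j)} for all 1 ≤ i, j ≤ m. Then there exist b̃_1, …, b̃_m ∈ V[[t]] such that: b̃_i − b_i ∈ t^{k_i}·V[[t]] for all i; (b̃_i, b̃_j) = (a_i, a_j) in F[[t]] for all i, j; and the F[[t]]-span of b̃_1, …, b̃_m is a primitive submodule of V[[t]] which is free with basis b̃_1, …, b̃_m. -/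
open TensorProduct

section AICSection
open PowerSeries
set_option linter.unusedSectionVars false
namespace AIC


variable {F : Type*} [Field F] {n : ℕ}

noncomputable def pair (g0 : Fin n → Fin n → F) (x y : Fin n → PowerSeries F) : PowerSeries F :=
  ∑ s, ∑ u, x s * y u * algebraMap F (PowerSeries F) (g0 s u)

variable (g0 : Fin n → Fin n → F)

lemma pair_symm (hg : ∀ s u, g0 s u = g0 u s) (x y : Fin n → PowerSeries F) :
    pair g0 x y = pair g0 y x := by
  rw [pair, pair, Finset.sum_comm]
  refine Finset.sum_congr rfl fun s _ => Finset.sum_congr rfl fun u _ => ?_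
  rw [hg u s]; ring

lemma pair_add_left (x x' y : Fin n → PowerSeries F) :
    pair g0 (x + x') y = pair g0 x y + pair g0 x' y := by
  simp [pair, add_mul, Finset.sum_add_distrib]

lemma pair_sub_left (x x' y : Fin n → PowerSeries F) :
    pair g0 (x - x') y = pair g0 x y - pair g0 x' y := by
  simp [pair, sub_mul, Finset.sum_sub_distrib]

lemma pair_sub_right (x y y' : Fin n → PowerSeries F) :
    pair g0 x (y - y') = pair g0 x y - pair g0 x y' := by
  simp [pair, sub_mul, mul_sub, Finset.sum_sub_distrib]

lemma pair_add_right (x y y' : Fin n → PowerSeries F) :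
    pair g0 x (y + y') = pair g0 x y + pair g0 x y' := by
  simp [pair, mul_add, add_mul, Finset.sum_add_distrib]

lemma pair_sum_left {ι : Type*} (s : Finset ι) (f : ι → Fin n → PowerSeries F) (y) :
    pair g0 (∑ i ∈ s, f i) y = ∑ i ∈ s, pair g0 (f i) y := by
  classical
  induction s using Finset.induction_on with
  | empty => simp [pair]
  | insert _ _ h ih => rw [Finset.sum_insert h, pair_add_left, ih, Finset.sum_insert h]

lemma pair_smul_left (c : PowerSeries F) (x y : Fin n → PowerSeries F) :
    pair g0 (c • x) y = c * pair g0 x y := by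
  simp [pair, Finset.mul_sum, mul_assoc]

lemma pair_smul_right (c : PowerSeries F) (x y : Fin n → PowerSeries F) :
    pair g0 x (c • y) = c * pair g0 x y := by
  simp only [pair, Finset.mul_sum]
  refine Finset.sum_congr rfl fun s _ => Finset.sum_congr rfl fun u _ => ?_
  simp; ring

lemma dvd_pair_left {c : ℕ} {x : Fin n → PowerSeries F} (hx : ∀ s, (X:PowerSeries F)^c ∣ x s)
    (y : Fin n → PowerSeries F) : (X:PowerSeries F)^c ∣ pair g0 x y := by
  refine Finset.dvd_sum fun s _ => Finset.dvd_sum fun u _ => ?_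
  exact ((hx s).mul_right _).mul_right _

lemma dvd_pair_right {c : ℕ} {y : Fin n → PowerSeries F} (hy : ∀ s, (X:PowerSeries F)^c ∣ y s)
    (x : Fin n → PowerSeries F) : (X:PowerSeries F)^c ∣ pair g0 x y := by
  refine Finset.dvd_sum fun s _ => Finset.dvd_sum fun u _ => ?_
  exact (((hy u).mul_left _).mul_right _)

section core

variable {m : ℕ} (k : Fin m → ℕ) (α : Fin m → Fin n → PowerSeries F)

noncomputable def Err (β' : Fin m → Fin n → PowerSeries F) (i j : Fin m) : PowerSeries F :=
  pair g0 (α i) (α j) - pair g0 (β' i) (β' j)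

noncomputable def eps (β' : Fin m → Fin n → PowerSeries F) (i l : Fin m) : PowerSeries F :=
  if k i < k l then Err g0 α β' i l
  else if k l < k i then 0
  else C (2⁻¹ : F) * Err g0 α β' i l

noncomputable def step (d : Fin m → Fin n → PowerSeries F)
    (β' : Fin m → Fin n → PowerSeries F) : Fin m → Fin n → PowerSeries F :=
  fun i => β' i + ∑ l, eps g0 k α β' i l • d l

noncomputable def newton (d β : Fin m → Fin n → PowerSeries F) : ℕ → Fin m → Fin n → PowerSeries F
  | 0 => β
  | N+1 => step g0 k α d (newton d β N)

variable [CharZero F]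

lemma Err_symm (hg : ∀ s u, g0 s u = g0 u s) (β' : Fin m → Fin n → PowerSeries F) (i j : Fin m) :
    Err g0 α β' i j = Err g0 α β' j i := by
  rw [Err, Err, pair_symm g0 hg (α i), pair_symm g0 hg (β' i)]

lemma eps_add_symm (hg : ∀ s u, g0 s u = g0 u s) (β' : Fin m → Fin n → PowerSeries F)
    (i j : Fin m) : eps g0 k α β' i j + eps g0 k α β' j i = Err g0 α β' i j := by
  rcases lt_trichotomy (k i) (k j) with h | h | h
  · rw [eps, eps, if_pos h, if_neg (by omega), if_pos h, add_zero]
  · rw [eps, eps, if_neg (by omega), if_neg (by omega), if_neg (by omega), if_neg (by omega),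
      Err_symm g0 α hg β' j i, ← add_mul, ← map_add]
    norm_num
  · rw [eps, eps, if_neg (by omega), if_pos h, if_pos h, Err_symm g0 α hg β' j i, zero_add]

lemma eps_dvd {N : ℕ} {β' : Fin m → Fin n → PowerSeries F}
    (h2 : ∀ i j, (X:PowerSeries F)^(min (k i) (k j) + N) ∣ Err g0 α β' i j) (i l : Fin m) :
    (X:PowerSeries F)^(k i + N) ∣ eps g0 k α β' i l := by
  rcases lt_trichotomy (k i) (k l) with h | h | h
  · rw [eps, if_pos h]
    exact (pow_dvd_pow _ (by omega : k i + N ≤ min (k i) (k l) + N)).trans (h2 i l)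
  · rw [eps, if_neg (by omega), if_neg (by omega)]
    exact ((pow_dvd_pow _ (by omega : k i + N ≤ min (k i) (k l) + N)).trans (h2 i l)).mul_left _
  · rw [eps, if_neg (by omega), if_pos h]
    exact dvd_zero _

lemma step_spec (hg : ∀ s u, g0 s u = g0 u s) (hk_pos : ∀ i, 1 ≤ k i)
    {β d : Fin m → Fin n → PowerSeries F}
    (hd : ∀ l i, pair g0 (d l) (β i) = if l = i then 1 else 0)
    (N : ℕ) (β' : Fin m → Fin n → PowerSeries F)
    (h1 : ∀ i s, (X:PowerSeries F)^(k i) ∣ (β' i s - β i s))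
    (h2 : ∀ i j, (X:PowerSeries F)^(min (k i) (k j) + N) ∣ Err g0 α β' i j) :
    (∀ i s, (X:PowerSeries F)^(k i + N) ∣ (step g0 k α d β' i s - β' i s)) ∧
    (∀ i s, (X:PowerSeries F)^(k i) ∣ (step g0 k α d β' i s - β i s)) ∧
    (∀ i j, (X:PowerSeries F)^(min (k i) (k j) + (N+1)) ∣ Err g0 α (step g0 k α d β') i j) := by
  set c : Fin m → Fin n → PowerSeries F := fun i => ∑ l, eps g0 k α β' i l • d l with hc_def
  have heps : ∀ i l, (X:PowerSeries F)^(k i + N) ∣ eps g0 k α β' i l := eps_dvd g0 k α h2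
  have hc : ∀ i s, (X:PowerSeries F)^(k i + N) ∣ c i s := by
    intro i s
    rw [hc_def]
    simp only [Finset.sum_apply, Pi.smul_apply, smul_eq_mul]
    exact Finset.dvd_sum fun l _ => (heps i l).mul_right _
  have hstep : ∀ i, step g0 k α d β' i = β' i + c i := fun i => rfl
  have hsd : ∀ i s, step g0 k α d β' i s - β' i s = c i s := by
    intro i s; rw [hstep]; simp
  refine ⟨fun i s => by rw [hsd]; exact hc i s, ?_, ?_⟩
  · intro i s
    have : step g0 k α d β' i s - β i s = (step g0 k α d β' i s - β' i s) + (β' i s - β i s) := by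
      ring
    rw [this, hsd]
    exact dvd_add ((pow_dvd_pow _ (Nat.le_add_right _ _)).trans (hc i s)) (h1 i s)
  · intro i j
    -- the residual pairing terms
    set r : Fin m → Fin m → PowerSeries F :=
      fun l j => pair g0 (d l) (β' j) - (if l = j then 1 else 0) with hr_def
    have hr : ∀ l j, (X:PowerSeries F)^(k j) ∣ r l j := by
      intro l j
      have : r l j = pair g0 (d l) (β' j - β j) := by
        rw [hr_def, pair_sub_right, hd]
      rw [this]
      exact dvd_pair_right g0 (fun s => h1 j s) (d l)
    have hpair_dl : ∀ l j, pair g0 (d l) (β' j) = (if l = j then 1 else 0) + r l j := by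
      intro l j; rw [hr_def]; ring
    have hcb : ∀ i j, pair g0 (c i) (β' j)
        = eps g0 k α β' i j + ∑ l, eps g0 k α β' i l * r l j := by
      intro i j
      rw [hc_def, pair_sum_left]
      have : ∀ l, pair g0 (eps g0 k α β' i l • d l) (β' j)
          = (eps g0 k α β' i l * (if l = j then 1 else 0)) + eps g0 k α β' i l * r l j := by
        intro l; rw [pair_smul_left, hpair_dl]; ring
      rw [Finset.sum_congr rfl fun l _ => this l, Finset.sum_add_distrib]
      congr 1
      simp [mul_ite, mul_one, mul_zero]
    have key : Err g0 α (step g0 k α d β') i j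
        = -(∑ l, eps g0 k α β' i l * r l j) - (∑ l, eps g0 k α β' j l * r l i)
          - pair g0 (c i) (c j) := by
      have expand : pair g0 (step g0 k α d β' i) (step g0 k α d β' j)
          = pair g0 (β' i) (β' j) + pair g0 (c i) (β' j) + pair g0 (c j) (β' i)
            + pair g0 (c i) (c j) := by
        rw [hstep, hstep, pair_add_left, pair_add_right, pair_add_right,
          pair_symm g0 hg (β' i) (c j)]
        ring
      have hE := eps_add_symm g0 k α hg β' i j
      rw [Err] at hE
      rw [Err, expand, hcb, hcb]
      linear_combination -hE
    rw [key]
    have hterm : ∀ i' j', min (k i) (k j) + (N+1) ≤ (k i' + N) + k j' →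
        (X:PowerSeries F)^(min (k i) (k j) + (N+1))
        ∣ ∑ l, eps g0 k α β' i' l * r l j' := by
      intro i' j' hij
      refine Finset.dvd_sum fun l _ => ?_
      have hdd : (X:PowerSeries F)^(k i' + N) * (X:PowerSeries F)^(k j')
          ∣ eps g0 k α β' i' l * r l j' := mul_dvd_mul (heps i' l) (hr l j')
      rw [← pow_add] at hdd
      exact (pow_dvd_pow _ hij).trans hdd
    have htermcc : (X:PowerSeries F)^(min (k i) (k j) + (N+1)) ∣ pair g0 (c i) (c j) := by
      rw [hc_def, pair_sum_left]
      refine Finset.dvd_sum fun l _ => ?_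
      have hd2 : (X:PowerSeries F)^(k j + N) ∣ pair g0 (d l) (c j) :=
        dvd_pair_right g0 (fun s => hc j s) (d l)
      have hdd : (X:PowerSeries F)^(k i + N) * (X:PowerSeries F)^(k j + N)
          ∣ pair g0 (eps g0 k α β' i l • d l) (c j) := by
        rw [pair_smul_left]
        exact mul_dvd_mul (heps i l) hd2
      rw [← pow_add] at hdd
      refine (pow_dvd_pow _ ?_).trans hdd
      have h1' := Nat.min_le_left (k i) (k j)
      have h2' := hk_pos j
      omega
    have hij1 : min (k i) (k j) + (N+1) ≤ (k i + N) + k j := by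
      have := Nat.min_le_left (k i) (k j); have := hk_pos j; omega
    have hij2 : min (k i) (k j) + (N+1) ≤ (k j + N) + k i := by
      have := Nat.min_le_right (k i) (k j); have := hk_pos i; omega
    exact dvd_sub (dvd_sub (dvd_neg.mpr (hterm i j hij1)) (hterm j i hij2)) htermcc

lemma newton_spec (hg : ∀ s u, g0 s u = g0 u s) (hk_pos : ∀ i, 1 ≤ k i)
    {β d : Fin m → Fin n → PowerSeries F}
    (hd : ∀ l i, pair g0 (d l) (β i) = if l = i then 1 else 0)
    (h0 : ∀ i j, (X:PowerSeries F)^(min (k i) (k j)) ∣ Err g0 α β i j) (N : ℕ) :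
    (∀ i s, (X:PowerSeries F)^(k i) ∣ (newton g0 k α d β N i s - β i s)) ∧
    (∀ i j, (X:PowerSeries F)^(min (k i) (k j) + N) ∣ Err g0 α (newton g0 k α d β N) i j) := by
  induction N with
  | zero =>
    refine ⟨fun i s => by simp [newton], fun i j => by simpa [newton] using h0 i j⟩
  | succ N ih =>
    have hs := step_spec g0 k α hg hk_pos hd N (newton g0 k α d β N) ih.1 ih.2
    exact ⟨hs.2.1, hs.2.2⟩

lemma newton_diff (hg : ∀ s u, g0 s u = g0 u s) (hk_pos : ∀ i, 1 ≤ k i)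
    {β d : Fin m → Fin n → PowerSeries F}
    (hd : ∀ l i, pair g0 (d l) (β i) = if l = i then 1 else 0)
    (h0 : ∀ i j, (X:PowerSeries F)^(min (k i) (k j)) ∣ Err g0 α β i j) (N : ℕ) :
    ∀ i s, (X:PowerSeries F)^(k i + N)
      ∣ (newton g0 k α d β (N+1) i s - newton g0 k α d β N i s) := by
  have h := newton_spec g0 k α hg hk_pos hd h0 N
  exact (step_spec g0 k α hg hk_pos hd N (newton g0 k α d β N) h.1 h.2).1

lemma newton_stab (hg : ∀ s u, g0 s u = g0 u s) (hk_pos : ∀ i, 1 ≤ k i)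
    {β d : Fin m → Fin n → PowerSeries F}
    (hd : ∀ l i, pair g0 (d l) (β i) = if l = i then 1 else 0)
    (h0 : ∀ i j, (X:PowerSeries F)^(min (k i) (k j)) ∣ Err g0 α β i j)
    (N M : ℕ) (hNM : N ≤ M) :
    ∀ i s, (X:PowerSeries F)^N
      ∣ (newton g0 k α d β M i s - newton g0 k α d β N i s) := by
  induction M, hNM using Nat.le_induction with
  | base => intro i s; simp
  | succ M hNM ih =>
    intro i s
    have heq : newton g0 k α d β (M+1) i s - newton g0 k α d β N i s
        = (newton g0 k α d β (M+1) i s - newton g0 k α d β M i s)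
          + (newton g0 k α d β M i s - newton g0 k α d β N i s) := by ring
    rw [heq]
    refine dvd_add ((pow_dvd_pow _ ?_).trans
      (newton_diff g0 k α hg hk_pos hd h0 M i s)) (ih i s)
    omega

noncomputable def nlimit (d β : Fin m → Fin n → PowerSeries F) :
    Fin m → Fin n → PowerSeries F :=
  fun i s => PowerSeries.mk fun dd => coeff dd (newton g0 k α d β (dd+1) i s)

lemma nlimit_dvd (hg : ∀ s u, g0 s u = g0 u s) (hk_pos : ∀ i, 1 ≤ k i)
    {β d : Fin m → Fin n → PowerSeries F}
    (hd : ∀ l i, pair g0 (d l) (β i) = if l = i then 1 else 0)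
    (h0 : ∀ i j, (X:PowerSeries F)^(min (k i) (k j)) ∣ Err g0 α β i j) (N : ℕ) :
    ∀ i s, (X:PowerSeries F)^N
      ∣ (nlimit g0 k α d β i s - newton g0 k α d β N i s) := by
  intro i s
  rw [X_pow_dvd_iff]
  intro dd hdd
  have h1 : (X:PowerSeries F)^(dd+1)
      ∣ (newton g0 k α d β N i s - newton g0 k α d β (dd+1) i s) :=
    newton_stab g0 k α hg hk_pos hd h0 (dd+1) N (by omega) i s
  have h2 := X_pow_dvd_iff.mp h1 dd (by omega)
  rw [map_sub] at h2 ⊢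
  rw [sub_eq_zero] at h2 ⊢
  rw [h2]
  simp [nlimit]

theorem core_exists (hg : ∀ s u, g0 s u = g0 u s) (hk_pos : ∀ i, 1 ≤ k i)
    {β d : Fin m → Fin n → PowerSeries F}
    (hd : ∀ l i, pair g0 (d l) (β i) = if l = i then 1 else 0)
    (h0 : ∀ i j, (X:PowerSeries F)^(min (k i) (k j)) ∣ Err g0 α β i j) :
    ∃ βt : Fin m → Fin n → PowerSeries F,
      (∀ i s, (X:PowerSeries F)^(k i) ∣ (βt i s - β i s)) ∧
      (∀ i j, pair g0 (βt i) (βt j) = pair g0 (α i) (α j)) := by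
  refine ⟨nlimit g0 k α d β, fun i s => ?_, fun i j => ?_⟩
  · have heq : nlimit g0 k α d β i s - β i s
        = (nlimit g0 k α d β i s - newton g0 k α d β (k i) i s)
          + (newton g0 k α d β (k i) i s - β i s) := by ring
    rw [heq]
    exact dvd_add (nlimit_dvd g0 k α hg hk_pos hd h0 (k i) i s)
      ((newton_spec g0 k α hg hk_pos hd h0 (k i)).1 i s)
  · rw [← sub_eq_zero]
    have key : ∀ N : ℕ, (X:PowerSeries F)^N
        ∣ (pair g0 (nlimit g0 k α d β i) (nlimit g0 k α d β j) - pair g0 (α i) (α j)) := by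
      intro N
      set L := nlimit g0 k α d β with hL
      set W := newton g0 k α d β N with hW
      have heq : pair g0 (L i) (L j) - pair g0 (α i) (α j)
          = (pair g0 (L i - W i) (L j) + pair g0 (W i) (L j - W j)) - Err g0 α W i j := by
        rw [Err, pair_sub_left, pair_sub_right]
        ring
      rw [heq]
      refine dvd_sub (dvd_add ?_ ?_) ?_
      · exact dvd_pair_left g0 (fun s => by
          simpa using nlimit_dvd g0 k α hg hk_pos hd h0 N i s) _
      · exact dvd_pair_right g0 (fun s => by
          simpa using nlimit_dvd g0 k α hg hk_pos hd h0 N j s) _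
      · exact (pow_dvd_pow _ (Nat.le_add_left _ _)).trans
          ((newton_spec g0 k α hg hk_pos hd h0 N).2 i j)
    ext dd
    have := X_pow_dvd_iff.mp (key (dd+1)) dd (by omega)
    simpa using this

end core


-- An equiv maps IsCompl to IsCompl
lemma isCompl_map {R M N : Type*} [CommRing R] [AddCommGroup M] [Module R M]
    [AddCommGroup N] [Module R N] (e : M ≃ₗ[R] N) {p q : Submodule R M}
    (h : IsCompl p q) : IsCompl (p.map (e : M →ₗ[R] N)) (q.map (e : M →ₗ[R] N)) := by
  have h1 := h.disjoint.map_orderIso (Submodule.orderIsoMapComap e)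
  have h2 := h.codisjoint.map_orderIso (Submodule.orderIsoMapComap e)
  exact ⟨h1, h2⟩

/-- coordinate functionals for a primitive free family -/
lemma coord_functionals {R M : Type*} [CommRing R] [AddCommGroup M] [Module R M]
    {m : ℕ} (β : Fin m → M)
    (hL : ∃ L' : Submodule R M, IsCompl (Submodule.span R (Set.range β)) L')
    (hind : ∀ c : Fin m → R, (∑ i, c i • β i) = 0 → ∀ i, c i = 0) :
    ∃ g : Fin m → (M →ₗ[R] R), ∀ j i, g j (β i) = if i = j then 1 else 0 := by
  obtain ⟨L', hcompl⟩ := hL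
  set p := Submodule.span R (Set.range β) with hp
  set π := Submodule.linearProjOfIsCompl p L' hcompl with hπ
  set tot : (Fin m → R) →ₗ[R] M :=
    { toFun := fun c => ∑ i, c i • β i
      map_add' := fun c c' => by simp [add_smul, Finset.sum_add_distrib]
      map_smul' := fun r c => by simp [smul_smul, Finset.smul_sum] } with htot
  have htot_apply : ∀ c, tot c = ∑ i, c i • β i := fun c => rfl
  have hmem : ∀ c, tot c ∈ p := by
    intro c
    rw [htot_apply]
    exact Submodule.sum_mem _ fun i _ =>
      Submodule.smul_mem _ _ (Submodule.subset_span ⟨i, rfl⟩)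
  set q : (Fin m → R) →ₗ[R] p := tot.codRestrict p hmem with hq
  have hbij : Function.Bijective q := by
    constructor
    · intro c c' hcc
      have : tot c = tot c' := congrArg Subtype.val hcc
      have h0 : ∑ i, (c - c') i • β i = 0 := by
        simp only [Pi.sub_apply, sub_smul, Finset.sum_sub_distrib]
        rw [← htot_apply, ← htot_apply, this, sub_self]
      funext i
      have := hind (c - c') h0 i
      simpa [sub_eq_zero] using this
    · rintro ⟨x, hx⟩
      rw [hp, Submodule.mem_span_range_iff_exists_fun] at hx
      obtain ⟨c, hc⟩ := hx
      exact ⟨c, Subtype.ext (show tot c = x from by rw [htot_apply]; exact hc)⟩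
  set eq := LinearEquiv.ofBijective q hbij with heq
  refine ⟨fun j => (LinearMap.proj j) ∘ₗ (eq.symm : p →ₗ[R] (Fin m → R)) ∘ₗ π, fun j i => ?_⟩
  have hβmem : β i ∈ p := Submodule.subset_span ⟨i, rfl⟩
  have h1 : π (β i) = ⟨β i, hβmem⟩ :=
    Submodule.linearProjOfIsCompl_apply_left hcompl ⟨β i, hβmem⟩
  have h2 : eq (Pi.single i 1) = ⟨β i, hβmem⟩ := by
    apply Subtype.ext
    show tot (Pi.single i 1) = β i
    rw [htot_apply]
    rw [Finset.sum_eq_single i (fun l _ hl => by simp [Pi.single_eq_of_ne hl])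
      (fun h => absurd (Finset.mem_univ i) h)]
    simp
  have h3 : eq.symm ⟨β i, hβmem⟩ = Pi.single i 1 := by
    rw [← h2, LinearEquiv.symm_apply_apply]
  simp only [LinearMap.comp_apply, LinearEquiv.coe_coe, h1, h3, LinearMap.proj_apply]
  rw [Pi.single_apply]
  simp [eq_comm]

lemma perturb {m n : ℕ} (β βt : Fin m → Fin n → PowerSeries F)
    (hL : ∃ L' : Submodule (PowerSeries F) (Fin n → PowerSeries F),
      IsCompl (Submodule.span (PowerSeries F) (Set.range β)) L')
    (hind : ∀ c : Fin m → PowerSeries F, (∑ i, c i • β i) = 0 → ∀ i, c i = 0)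
    (hdiff : ∀ i s, (X:PowerSeries F) ∣ (βt i s - β i s)) :
    (∃ L' : Submodule (PowerSeries F) (Fin n → PowerSeries F),
      IsCompl (Submodule.span (PowerSeries F) (Set.range βt)) L') ∧
    (∀ c : Fin m → PowerSeries F, (∑ i, c i • βt i) = 0 → ∀ i, c i = 0) := by
  classical
  obtain ⟨L', hcompl⟩ := hL
  obtain ⟨g, hg⟩ := coord_functionals β ⟨L', hcompl⟩ hind
  set θ : (Fin n → PowerSeries F) →ₗ[PowerSeries F] (Fin n → PowerSeries F) :=
    { toFun := fun x => ∑ i, g i x • (βt i - β i)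
      map_add' := fun x y => by simp [map_add, add_smul, Finset.sum_add_distrib]
      map_smul' := fun r x => by simp [map_smul, Finset.smul_sum, smul_smul] } with hθ
  set T : (Fin n → PowerSeries F) →ₗ[PowerSeries F] (Fin n → PowerSeries F) :=
    LinearMap.id + θ with hT
  have hθβ : ∀ i, θ (β i) = βt i - β i := by
    intro i
    rw [hθ]
    simp only [LinearMap.coe_mk, AddHom.coe_mk]
    rw [Finset.sum_congr rfl fun l (_ : l ∈ Finset.univ) =>
      (by rw [hg l i] : g l (β i) • (βt l - β l) = (if i = l then (1:PowerSeries F) else 0) • (βt l - β l))]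
    rw [Finset.sum_congr rfl fun l (_ : l ∈ Finset.univ) => (ite_smul _ _ _ _ : _ = _)]
    simp [Finset.sum_ite_eq]
  have hTβ : ∀ i, T (β i) = βt i := by
    intro i
    rw [hT]
    simp [hθβ i]
  set bs := Pi.basisFun (PowerSeries F) (Fin n) with hbs
  have hmap : (LinearMap.toMatrix bs bs T).map constantCoeff = 1 := by
    ext s u
    rw [Matrix.map_apply, LinearMap.toMatrix_apply]
    have hXdvd : (X:PowerSeries F) ∣ θ (bs u) s := by
      rw [hθ]
      simp only [LinearMap.coe_mk, AddHom.coe_mk, Finset.sum_apply, Pi.smul_apply,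
        smul_eq_mul, Pi.sub_apply]
      exact Finset.dvd_sum fun l _ => Dvd.dvd.mul_left (hdiff l s) _
    have hθc : constantCoeff (θ (bs u) s) = 0 := by
      obtain ⟨y, hy⟩ := hXdvd
      rw [hy, map_mul, constantCoeff_X, zero_mul]
    have hrepr : bs.repr (T (bs u)) s = T (bs u) s := by
      simp [hbs]
    rw [hrepr, hT]
    simp only [LinearMap.add_apply, LinearMap.id_apply, Pi.add_apply, map_add, hθc, add_zero]
    rw [hbs]
    simp only [Pi.basisFun_apply]
    rw [Pi.single_apply, Matrix.one_apply]
    split <;> simp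
  have hdet : IsUnit (LinearMap.toMatrix bs bs T).det := by
    rw [isUnit_iff_constantCoeff]
    rw [RingHom.map_det (constantCoeff (R := F)) _, RingHom.mapMatrix_apply, hmap, Matrix.det_one]
    exact isUnit_one
  set e := LinearEquiv.ofIsUnitDet hdet with he
  have hecoe : ∀ x, e x = T x := fun x => by rw [he]; rfl
  have heinj : Function.Injective T := by
    intro x y hxy
    have : e x = e y := by rw [hecoe, hecoe, hxy]
    exact e.injective this
  constructor
  · refine ⟨Submodule.map (e : (Fin n → PowerSeries F) →ₗ[PowerSeries F] (Fin n → PowerSeries F)) L', ?_⟩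
    have hspan : Submodule.span (PowerSeries F) (Set.range βt)
        = Submodule.map (e : (Fin n → PowerSeries F) →ₗ[PowerSeries F] (Fin n → PowerSeries F))
          (Submodule.span (PowerSeries F) (Set.range β)) := by
      have hcomp : (⇑(e : (Fin n → PowerSeries F) →ₗ[PowerSeries F] (Fin n → PowerSeries F))) ∘ β = βt :=
        funext fun i => by
          rw [Function.comp_apply]
          show e (β i) = βt i
          rw [hecoe, hTβ]
      rw [Submodule.map_span, ← Set.range_comp, hcomp]
    rw [hspan]
    exact isCompl_map e hcompl
  · intro c hc i
    have hTc : T (∑ i, c i • β i) = ∑ i, c i • βt i := by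
      rw [map_sum]
      exact Finset.sum_congr rfl fun l _ => by rw [map_smul, hTβ]
    have hT0 : T (∑ i, c i • β i) = T 0 := by rw [hTc, hc, map_zero]
    exact hind c (heinj hT0) i


lemma pair_sum_right {F : Type*} [Field F] {n : ℕ} (g0 : Fin n → Fin n → F)
    {ι : Type*} (s : Finset ι) (x : Fin n → PowerSeries F) (f : ι → Fin n → PowerSeries F) :
    pair g0 x (∑ i ∈ s, f i) = ∑ i ∈ s, pair g0 x (f i) := by
  classical
  induction s using Finset.induction_on with
  | empty => simp [pair]
  | insert _ _ h ih => rw [Finset.sum_insert h, pair_add_right, ih, Finset.sum_insert h]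

section dual

variable {F : Type*} [Field F] {V : Type*} [AddCommGroup V] [Module F V]
  [FiniteDimensional F V] (BV : V →ₗ[F] V →ₗ[F] F)

lemma BV_expand {n : ℕ} (e : Module.Basis (Fin n) F V) (v w : V) :
    BV v w = ∑ s, ∑ u, e.repr v s * e.repr w u * BV (e s) (e u) := by
  calc BV v w = BV (∑ s, e.repr v s • e s) w := by rw [e.sum_repr]
    _ = ∑ s, e.repr v s * BV (e s) w := by
          rw [map_sum, LinearMap.sum_apply]
          exact Finset.sum_congr rfl fun s _ => by
            rw [map_smul, LinearMap.smul_apply, smul_eq_mul]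
    _ = ∑ s, ∑ u, e.repr v s * e.repr w u * BV (e s) (e u) := by
          refine Finset.sum_congr rfl fun s _ => ?_
          conv_lhs => rw [← e.sum_repr w]
          rw [map_sum, Finset.mul_sum]
          exact Finset.sum_congr rfl fun u _ => by rw [map_smul, smul_eq_mul]; ring

variable {n : ℕ} (e : Module.Basis (Fin n) F V)

/-- the coordinate embedding `V → (Fin n → F[[t]])` -/
noncomputable def iota (v : V) : Fin n → PowerSeries F :=
  fun s => algebraMap F (PowerSeries F) (e.repr v s)

lemma pair_iota (v w : V) :
    pair (fun s u => BV (e s) (e u)) (iota e v) (iota e w)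
      = algebraMap F (PowerSeries F) (BV v w) := by
  rw [pair, BV_expand BV e v w, map_sum]
  refine Finset.sum_congr rfl fun s _ => ?_
  rw [map_sum]
  refine Finset.sum_congr rfl fun u _ => ?_
  rw [iota, iota, map_mul, map_mul]

lemma iota_basis_apply (u' s : Fin n) :
    iota e (e u') s = if u' = s then 1 else 0 := by
  rw [iota, Module.Basis.repr_self_apply]
  split <;> simp

lemma eq_sum_iota_basis (y : Fin n → PowerSeries F) :
    y = ∑ u', y u' • iota e (e u') := by
  funext s
  rw [Finset.sum_apply]
  rw [Finset.sum_congr rfl fun u' (_ : u' ∈ Finset.univ) => by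
    rw [Pi.smul_apply, iota_basis_apply e u' s, smul_eq_mul]]
  rw [Finset.sum_congr rfl fun u' (_ : u' ∈ Finset.univ) => (mul_ite _ _ _ _ : _ = _)]
  simp [Finset.sum_ite_eq']

lemma exists_dual (hnd : ∀ v : V, (∀ w : V, BV v w = 0) → v = 0) :
    ∃ 𝔡 : Fin n → (Fin n → PowerSeries F), ∀ u (y : Fin n → PowerSeries F),
      pair (fun s u' => BV (e s) (e u')) (𝔡 u) y = y u := by
  classical
  have hnd' : LinearMap.BilinForm.Nondegenerate BV :=
    LinearMap.BilinForm.Nondegenerate.ofSeparatingLeft (fun v hv => hnd v hv)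
  have hsep : LinearMap.SeparatingLeft BV := fun v hv => hnd v hv
  set d0 : Fin n → V := fun u => (LinearMap.BilinForm.toDual BV hnd').symm (e.coord u) with hd0
  have hd0p : ∀ u w, BV (d0 u) w = e.repr w u := by
    intro u w
    have h1 : LinearMap.BilinForm.toDual BV hnd' (d0 u) = e.coord u := by
      rw [hd0]; exact (LinearMap.BilinForm.toDual BV hnd').apply_symm_apply _
    have h2 := LinearMap.BilinForm.toDual_def (B := BV) hnd' (m := d0 u) (n := w)
    rw [← h2, h1, Module.Basis.coord_apply]
  refine ⟨fun u => iota e (d0 u), fun u y => ?_⟩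
  conv_lhs => rw [eq_sum_iota_basis e y]
  rw [pair_sum_right]
  have : ∀ u', pair (fun s u' => BV (e s) (e u')) (iota e (d0 u)) (y u' • iota e (e u'))
      = y u' * (if u' = u then 1 else 0) := by
    intro u'
    rw [pair_smul_right, pair_iota, hd0p u (e u'), Module.Basis.repr_self_apply]
    split <;> simp
  rw [Finset.sum_congr rfl fun u' _ => this u']
  simp [Finset.sum_ite_eq']

end dual

end AIC
end AICSection

set_option maxHeartbeats 2000000 in
open AIC PowerSeries in
/-- Let `k₁ ≥ ⋯ ≥ k_m ≥ 1` and let `L₁, L₂` be primitive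
submodules of `V[[t]]`, free with bases `a₁, …, a_m` and `b₁, …, b_m`. If
`(aᵢ, aⱼ) ≡ (bᵢ, bⱼ) mod t^{min(kᵢ,kⱼ)}` for all `i, j`, then the `bᵢ` can be
altered to `b̃ᵢ` with `b̃ᵢ − bᵢ ∈ t^{kᵢ}·V[[t]]`, `(b̃ᵢ, b̃ⱼ) = (aᵢ, aⱼ)`, and the
`F[[t]]`-span of the `b̃ᵢ` a primitive submodule of `V[[t]]`, free with basis
`b̃₁, …, b̃_m`. -/
theorem approximate_isometry_correction {F : Type*} [Field F] [CharZero F]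
    {V : Type*} [AddCommGroup V] [Module F V] [FiniteDimensional F V]
    (BV : V →ₗ[F] V →ₗ[F] F) (hsymm : ∀ v w : V, BV v w = BV w v)
    (hnd : ∀ v : V, (∀ w : V, BV v w = 0) → v = 0)
    -- the F[[t]]-bilinear extension of the form to V[[t]]
    (BR : (PowerSeries F ⊗[F] V) → (PowerSeries F ⊗[F] V) → PowerSeries F)
    (hBR_addl : ∀ x y z, BR (x + y) z = BR x z + BR y z)
    (hBR_addr : ∀ x y z, BR x (y + z) = BR x y + BR x z)
    (hBR_val : ∀ (a : PowerSeries F) (v : V) (b : PowerSeries F) (w : V),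
      BR (a ⊗ₜ[F] v) (b ⊗ₜ[F] w) = a * b * algebraMap F (PowerSeries F) (BV v w))
    {m : ℕ} (k : Fin m → ℕ)
    (hk_anti : ∀ i j : Fin m, i ≤ j → k j ≤ k i) (hk_pos : ∀ i, 1 ≤ k i)
    (a b : Fin m → PowerSeries F ⊗[F] V)
    -- `L₁` is primitive with basis `a`
    (hL₁ : ∃ L' : Submodule (PowerSeries F) (PowerSeries F ⊗[F] V),
      IsCompl (Submodule.span (PowerSeries F) (Set.range a)) L')
    (ha_ind : ∀ c : Fin m → PowerSeries F, (∑ i, c i • a i) = 0 → ∀ i, c i = 0)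
    -- `L₂` is primitive with basis `b`
    (hL₂ : ∃ L' : Submodule (PowerSeries F) (PowerSeries F ⊗[F] V),
      IsCompl (Submodule.span (PowerSeries F) (Set.range b)) L')
    (hb_ind : ∀ c : Fin m → PowerSeries F, (∑ i, c i • b i) = 0 → ∀ i, c i = 0)
    -- the congruence (5.8): (aᵢ,aⱼ) ≡ (bᵢ,bⱼ) mod t^{min(kᵢ,kⱼ)}
    (hcong : ∀ i j : Fin m, BR (a i) (a j) - BR (b i) (b j) ∈
      Ideal.span {(PowerSeries.X : PowerSeries F) ^ min (k i) (k j)}) :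
    ∃ bt : Fin m → PowerSeries F ⊗[F] V,
      (∀ i, ∃ c : PowerSeries F ⊗[F] V,
        bt i = b i + ((PowerSeries.X : PowerSeries F) ^ k i) • c) ∧
      (∀ i j, BR (bt i) (bt j) = BR (a i) (a j)) ∧
      (∃ L' : Submodule (PowerSeries F) (PowerSeries F ⊗[F] V),
        IsCompl (Submodule.span (PowerSeries F) (Set.range bt)) L') ∧
      (∀ c : Fin m → PowerSeries F, (∑ i, c i • bt i) = 0 → ∀ i, c i = 0) := by
  classical
  set n := Module.finrank F V with hn
  set e : Module.Basis (Fin n) F V := Module.finBasis F V with he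
  set g0 : Fin n → Fin n → F := fun s u => BV (e s) (e u) with hg0
  have hg : ∀ s u, g0 s u = g0 u s := fun s u => hsymm _ _
  set bR : Module.Basis (Fin n) (PowerSeries F) (PowerSeries F ⊗[F] V) :=
    e.baseChange (PowerSeries F) with hbR
  set Φ : (PowerSeries F ⊗[F] V) ≃ₗ[PowerSeries F] (Fin n → PowerSeries F) :=
    bR.equivFun with hΦ
  -- basic additivity facts for BR
  have BR0l : ∀ z, BR 0 z = 0 := by
    intro z
    have h := hBR_addl 0 0 z
    rw [add_zero] at h
    exact (add_eq_left.mp h.symm)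
  have BR0r : ∀ z, BR z 0 = 0 := by
    intro z
    have h := hBR_addr z 0 0
    rw [add_zero] at h
    exact (add_eq_left.mp h.symm)
  have BRsuml : ∀ {ι : Type} (t : Finset ι) (f : ι → PowerSeries F ⊗[F] V) (z),
      BR (∑ i ∈ t, f i) z = ∑ i ∈ t, BR (f i) z := by
    intro ι t f z
    induction t using Finset.induction_on with
    | empty => simpa using BR0l z
    | insert _ _ h ih => rw [Finset.sum_insert h, hBR_addl, ih, Finset.sum_insert h]
  have BRsumr : ∀ {ι : Type} (t : Finset ι) (z) (f : ι → PowerSeries F ⊗[F] V),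
      BR z (∑ i ∈ t, f i) = ∑ i ∈ t, BR z (f i) := by
    intro ι t z f
    induction t using Finset.induction_on with
    | empty => simpa using BR0r z
    | insert _ _ h ih => rw [Finset.sum_insert h, hBR_addr, ih, Finset.sum_insert h]
  -- the bridge between BR and the coordinate pairing
  have hbridge : ∀ x y, BR x y = pair g0 (Φ x) (Φ y) := by
    intro x y
    have hx : x = ∑ s, (Φ x s) ⊗ₜ[F] (e s) := by
      conv_lhs => rw [← Module.Basis.sum_equivFun bR x]
      refine Finset.sum_congr rfl fun s _ => ?_
      rw [hbR, Module.Basis.baseChange_apply, smul_tmul', smul_eq_mul, mul_one]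
    have hy : y = ∑ u, (Φ y u) ⊗ₜ[F] (e u) := by
      conv_lhs => rw [← Module.Basis.sum_equivFun bR y]
      refine Finset.sum_congr rfl fun u _ => ?_
      rw [hbR, Module.Basis.baseChange_apply, smul_tmul', smul_eq_mul, mul_one]
    conv_lhs => rw [hx, hy]
    rw [BRsuml]
    rw [Finset.sum_congr rfl fun s (_ : s ∈ Finset.univ) => BRsumr Finset.univ _ _]
    rw [pair]
    refine Finset.sum_congr rfl fun s _ => Finset.sum_congr rfl fun u _ => ?_
    rw [hBR_val]
  -- coordinates of the data
  set α : Fin m → Fin n → PowerSeries F := fun i => Φ (a i) with hα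
  set β : Fin m → Fin n → PowerSeries F := fun i => Φ (b i) with hβ
  have h0 : ∀ i j, (X : PowerSeries F)^(min (k i) (k j)) ∣ Err g0 α β i j := by
    intro i j
    have h := hcong i j
    rw [Ideal.mem_span_singleton] at h
    rw [Err, hα, hβ, ← hbridge, ← hbridge]
    exact h
  -- transported primitivity and independence of β
  have hLβ : ∃ L' : Submodule (PowerSeries F) (Fin n → PowerSeries F),
      IsCompl (Submodule.span (PowerSeries F) (Set.range β)) L' := by
    obtain ⟨L', hL'⟩ := hL₂
    refine ⟨L'.map (Φ : (PowerSeries F ⊗[F] V) →ₗ[PowerSeries F] (Fin n → PowerSeries F)), ?_⟩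
    have hsp : Submodule.span (PowerSeries F) (Set.range β)
        = (Submodule.span (PowerSeries F) (Set.range b)).map
          (Φ : (PowerSeries F ⊗[F] V) →ₗ[PowerSeries F] (Fin n → PowerSeries F)) := by
      rw [Submodule.map_span, ← Set.range_comp]
      rfl
    rw [hsp]
    exact isCompl_map Φ hL'
  have hindβ : ∀ c : Fin m → PowerSeries F, (∑ i, c i • β i) = 0 → ∀ i, c i = 0 := by
    intro c hc
    apply hb_ind c
    apply Φ.injective
    rw [map_sum, map_zero]
    rw [Finset.sum_congr rfl fun i (_ : i ∈ Finset.univ) => (map_smul Φ (c i) (b i) : _ = _)]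
    exact hc
  -- dual vectors
  obtain ⟨dd, hdd⟩ := exists_dual BV e hnd
  obtain ⟨g, hgco⟩ := coord_functionals β hLβ hindβ
  set d : Fin m → Fin n → PowerSeries F :=
    fun j => ∑ u, g j ((Pi.single u 1 : Fin n → PowerSeries F)) • dd u with hd_def
  have hd : ∀ l i, pair g0 (d l) (β i) = if l = i then 1 else 0 := by
    intro l i
    rw [hd_def, pair_sum_left]
    have hterm : ∀ u, pair g0 (g l ((Pi.single u 1 : Fin n → PowerSeries F)) • dd u) (β i)
        = g l ((Pi.single u 1 : Fin n → PowerSeries F)) * β i u := by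
      intro u
      rw [pair_smul_left]
      congr 1
      exact hdd u (β i)
    rw [Finset.sum_congr rfl fun u _ => hterm u]
    have hβsingle : β i = ∑ u, β i u • (Pi.single u 1 : Fin n → PowerSeries F) := by
      funext s
      rw [Finset.sum_apply]
      rw [Finset.sum_congr rfl fun u (_ : u ∈ Finset.univ) => by
        rw [Pi.smul_apply, Pi.single_apply, smul_eq_mul, mul_ite, mul_one, mul_zero]]
      simp [Finset.sum_ite_eq]
    have : g l (β i) = ∑ u, g l ((Pi.single u 1 : Fin n → PowerSeries F)) * β i u := by
      conv_lhs => rw [hβsingle]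
      rw [map_sum]
      exact Finset.sum_congr rfl fun u _ => by rw [map_smul, smul_eq_mul]; ring
    rw [← this, hgco l i]
    simp [eq_comm]
  -- run the Newton iteration
  obtain ⟨βt, hβt1, hβt2⟩ := core_exists g0 k α hg hk_pos hd h0
  have hdiff1 : ∀ i s, (X : PowerSeries F) ∣ (βt i s - β i s) := by
    intro i s
    have h1 : (X : PowerSeries F)^1 ∣ (X : PowerSeries F)^(k i) := pow_dvd_pow _ (hk_pos i)
    rw [pow_one] at h1
    exact h1.trans (hβt1 i s)
  obtain ⟨hLt, hindt⟩ := perturb β βt hLβ hindβ hdiff1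
  -- assemble
  refine ⟨fun i => Φ.symm (βt i), ?_, ?_, ?_, ?_⟩
  · intro i
    have hq : ∀ s, ∃ q, βt i s - β i s = (X : PowerSeries F)^(k i) * q := hβt1 i
    choose q hq using hq
    refine ⟨Φ.symm q, ?_⟩
    apply Φ.injective
    rw [map_add, map_smul, Φ.apply_symm_apply, Φ.apply_symm_apply]
    funext s
    rw [Pi.add_apply, Pi.smul_apply, smul_eq_mul]
    have h' := hq s
    have hbb : Φ (b i) s = β i s := rfl
    rw [hbb]
    linear_combination h'
  · intro i j
    rw [hbridge, hbridge, Φ.apply_symm_apply, Φ.apply_symm_apply]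
    exact hβt2 i j
  · obtain ⟨L', hL'⟩ := hLt
    refine ⟨L'.map (Φ.symm : (Fin n → PowerSeries F) →ₗ[PowerSeries F] (PowerSeries F ⊗[F] V)), ?_⟩
    have hsp : Submodule.span (PowerSeries F) (Set.range fun i => Φ.symm (βt i))
        = (Submodule.span (PowerSeries F) (Set.range βt)).map
          (Φ.symm : (Fin n → PowerSeries F) →ₗ[PowerSeries F] (PowerSeries F ⊗[F] V)) := by
      rw [Submodule.map_span, ← Set.range_comp]
      rfl
    rw [hsp]
    exact isCompl_map Φ.symm hL'
  · intro c hc i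
    apply hindt c _ i
    apply Φ.symm.injective
    rw [map_sum, map_zero]
    rw [Finset.sum_congr rfl fun l (_ : l ∈ Finset.univ) => (map_smul Φ.symm (c l) (βt l) : _ = _)]
    exact hc
end

section
/- Let W be a finite-dimensional F-vector space with nilpotent endomorphism t (an F[[t]]-module), and let B : (W ⊗_F V) × (W ⊗_F V) → S_t^2(W) be the unique F-bilinear map satisfying B(u⊗v, u'⊗v') = (v, v')·(u ⊗ u' + u' ⊗ u); thus B(x_0, ·) is the differential of the quadratic map T_W at x_0. Then for x_0 ∈ W ⊗_F V, the F-linear map y ↦ B(x_0, y) from W ⊗_F V to S_t^2(W) is surjective if and only if Im f_{x_0} = W. -/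
open TensorProduct

set_option maxHeartbeats 1000000

/-- Let `W` be a finite-dimensional `F`-vector space with a
nilpotent action of `t` (an `F[[t]]`-module), and let `B` be the unique `F`-bilinear
map `(W ⊗_F V) × (W ⊗_F V) → S_t²(W)` with
`B(u⊗v, u'⊗v') = (v,v')·(u ⊗ u' + u' ⊗ u)` (so `B(x₀,·)` is the differential of the
quadratic map `T_W` at `x₀`). Then `y ↦ B(x₀, y)` is surjective onto the symmetric
tensors `S_t²(W) ⊆ W ⊗_{F[[t]]} W` if and only if `Im f_{x₀} = W`. -/
theorem tW_differential_surjective_iff {F : Type*} [Field F] [CharZero F]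
    {W : Type*} [AddCommGroup W] [Module F W] [Module (PowerSeries F) W]
    [IsScalarTower F (PowerSeries F) W] [FiniteDimensional F W]
    (hnilp : ∃ N : ℕ, ∀ u : W, ((PowerSeries.X : PowerSeries F) ^ N) • u = 0)
    {V : Type*} [AddCommGroup V] [Module F V] [FiniteDimensional F V]
    (BV : V →ₗ[F] V →ₗ[F] F) (hsymm : ∀ v w : V, BV v w = BV w v)
    (hnd : ∀ v : V, (∀ w : V, BV v w = 0) → v = 0)
    -- `f_x`, characterized by additivity and its values on simple tensors
    (fx : (W ⊗[F] V) → ((PowerSeries F ⊗[F] V) →ₗ[PowerSeries F] W))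
    (hfx_add : ∀ x y : W ⊗[F] V, fx (x + y) = fx x + fx y)
    (hfx_val : ∀ (u : W) (v : V) (b : PowerSeries F) (w : V),
      fx (u ⊗ₜ[F] v) (b ⊗ₜ[F] w) = (b * algebraMap F (PowerSeries F) (BV v w)) • u)
    -- the polarized form `B` of `T_W`, characterized by biadditivity and its
    -- values on simple tensors
    (B : (W ⊗[F] V) → (W ⊗[F] V) → (W ⊗[PowerSeries F] W))
    (hB_addl : ∀ x y z, B (x + y) z = B x z + B y z)
    (hB_addr : ∀ x y z, B x (y + z) = B x y + B x z)
    (hB_val : ∀ (u : W) (v : V) (u' : W) (v' : V),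
      B (u ⊗ₜ[F] v) (u' ⊗ₜ[F] v')
        = algebraMap F (PowerSeries F) (BV v v') •
          (u ⊗ₜ[PowerSeries F] u' + u' ⊗ₜ[PowerSeries F] u))
    (x₀ : W ⊗[F] V) :
    (∀ z ∈ LinearMap.eqLocus
        ((TensorProduct.comm (PowerSeries F) W W).toLinearMap) LinearMap.id,
      ∃ y : W ⊗[F] V, B x₀ y = z) ↔
    LinearMap.range (fx x₀) = ⊤ := by
  
  classical
  have hfx0 : fx 0 = 0 := by
    have := hfx_add 0 0
    rw [add_zero] at this
    exact left_eq_add.mp this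
  have hB0r : ∀ x, B x 0 = 0 := by
    intro x
    have := hB_addr x 0 0
    rw [add_zero] at this
    exact left_eq_add.mp this
  have hB0l : ∀ z, B 0 z = 0 := by
    intro z
    have := hB_addl 0 0 z
    rw [add_zero] at this
    exact left_eq_add.mp this
  -- key formula: B x (u' ⊗ v') = fx x (1 ⊗ v') ⊗ u' + u' ⊗ fx x (1 ⊗ v')
  have hBx : ∀ (x : W ⊗[F] V) (u' : W) (v' : V),
      B x (u' ⊗ₜ[F] v')
        = (fx x ((1 : PowerSeries F) ⊗ₜ[F] v')) ⊗ₜ[PowerSeries F] u'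
          + u' ⊗ₜ[PowerSeries F] (fx x ((1 : PowerSeries F) ⊗ₜ[F] v')) := by
    intro x u' v'
    induction x using TensorProduct.induction_on with
    | zero => simp [hB0l, hfx0]
    | tmul u v =>
        rw [hB_val, hfx_val, one_mul, smul_add, TensorProduct.smul_tmul',
          TensorProduct.tmul_smul]
    | add x y hx hy =>
        rw [hB_addl, hx, hy, hfx_add, LinearMap.add_apply, TensorProduct.add_tmul,
          TensorProduct.tmul_add]
        abel
  -- fx x₀ on scaled simple tensors
  have hfs : ∀ (b : PowerSeries F) (v : V),
      fx x₀ (b ⊗ₜ[F] v) = b • fx x₀ ((1 : PowerSeries F) ⊗ₜ[F] v) := by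
    intro b v
    rw [show (b ⊗ₜ[F] v : PowerSeries F ⊗[F] V) = b • ((1 : PowerSeries F) ⊗ₜ[F] v) by
      rw [TensorProduct.smul_tmul', smul_eq_mul, mul_one], map_smul]
  -- F-homogeneity of B x₀ in the second variable
  have hBsmul : ∀ (c : F) (y : W ⊗[F] V),
      B x₀ (c • y) = algebraMap F (PowerSeries F) c • B x₀ y := by
    intro c y
    induction y using TensorProduct.induction_on with
    | zero => rw [smul_zero, hB0r, smul_zero]
    | tmul u' v' =>
        rw [show c • (u' ⊗ₜ[F] v') = (c • u') ⊗ₜ[F] v' from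
          (TensorProduct.smul_tmul' c u' v'), hBx, hBx,
          ← algebraMap_smul (PowerSeries F) c u']
        simp only [smul_add, TensorProduct.tmul_smul, TensorProduct.smul_tmul']
    | add y z hy hz =>
        rw [smul_add, hB_addr, hy, hz, hB_addr, smul_add]
  constructor
  · -- surjectivity onto symmetric tensors → range fx x₀ = ⊤
    intro hs
    by_contra hM
    -- the F-submodule (range fx x₀) ⊔ X•W
    let lX : W →ₗ[F] W :=
      { toFun := fun u => (PowerSeries.X : PowerSeries F) • u
        map_add' := fun a b => smul_add _ a b
        map_smul' := fun c u => (smul_comm (PowerSeries.X : PowerSeries F) c u) }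
    let N : Submodule F W :=
      (LinearMap.range (fx x₀)).restrictScalars F ⊔ LinearMap.range lX
    have hNne : N ≠ ⊤ := by
      intro hN
      apply hM
      have step : ∀ k : ℕ, ∀ u : W, ∃ m ∈ LinearMap.range (fx x₀),
          ∃ w : W, u = m + ((PowerSeries.X : PowerSeries F) ^ k) • w := by
        intro k
        induction k with
        | zero => intro u; exact ⟨0, zero_mem _, u, by rw [pow_zero, one_smul, zero_add]⟩
        | succ k ih =>
            intro u
            obtain ⟨m, hm, w, hw⟩ := ih u
            have hwN : w ∈ N := hN ▸ Submodule.mem_top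
            obtain ⟨m', hm', w', hw', hww⟩ := Submodule.mem_sup.mp hwN
            obtain ⟨w'', hw''⟩ := hw'
            refine ⟨m + ((PowerSeries.X : PowerSeries F) ^ k) • m',
              add_mem hm (Submodule.smul_mem _ _ hm'), w'', ?_⟩
            have hcomp : ((PowerSeries.X : PowerSeries F) ^ k) • lX w''
                = ((PowerSeries.X : PowerSeries F) ^ (k + 1)) • w'' := by
              show ((PowerSeries.X : PowerSeries F) ^ k) •
                ((PowerSeries.X : PowerSeries F) • w'') = _
              rw [smul_smul, ← pow_succ]
            rw [hw, ← hww, ← hw'', smul_add, hcomp, ← add_assoc]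
      obtain ⟨Nn, hNn⟩ := hnilp
      rw [eq_top_iff]
      intro u _
      obtain ⟨m, hm, w, hw⟩ := step Nn u
      rw [hw, hNn w, add_zero]
      exact hm
    -- choose w₀ ∉ N and a functional φ vanishing on N with φ w₀ ≠ 0
    obtain ⟨w₀, hw₀⟩ : ∃ w₀ : W, w₀ ∉ N := by
      by_contra h
      push_neg at h
      exact hNne (Submodule.eq_top_iff'.mpr h)
    have hq : N.mkQ w₀ ≠ 0 := by
      simp only [Submodule.mkQ_apply, ne_eq, Submodule.Quotient.mk_eq_zero]
      exact hw₀
    obtain ⟨g, hg⟩ : ∃ g : Module.Dual F (W ⧸ N), g (N.mkQ w₀) ≠ 0 := by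
      by_contra h
      push_neg at h
      exact hq ((Module.forall_dual_apply_eq_zero_iff F _).mp h)
    set φ : W →ₗ[F] F := g ∘ₗ N.mkQ with hφdef
    have hφN : ∀ u ∈ N, φ u = 0 := by
      intro u hu
      have : N.mkQ u = 0 := by rw [Submodule.mkQ_apply, Submodule.Quotient.mk_eq_zero]; exact hu
      simp [hφdef, this]
    have hφw₀ : φ w₀ ≠ 0 := hg
    have hφX : ∀ u : W, φ ((PowerSeries.X : PowerSeries F) • u) = 0 := fun u =>
      hφN _ (Submodule.mem_sup_right ⟨u, rfl⟩)
    have hφM : ∀ u ∈ LinearMap.range (fx x₀), φ u = 0 := fun u hu =>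
      hφN _ (Submodule.mem_sup_left hu)
    have hφsmul : ∀ (b : PowerSeries F) (u : W),
        φ (b • u) = PowerSeries.constantCoeff (R := F) b * φ u := by
      intro b u
      conv_lhs => rw [PowerSeries.eq_X_mul_shift_add_const b]
      rw [add_smul, map_add]
      have h1 : φ (((PowerSeries.X : PowerSeries F) *
          PowerSeries.mk fun p => (PowerSeries.coeff (R := F) (p + 1)) b) • u) = 0 := by
        rw [mul_smul]
        exact hφX _
      have h2 : ((PowerSeries.C (R := F)) (PowerSeries.constantCoeff (R := F) b)) • u
          = (PowerSeries.constantCoeff (R := F) b) • u := by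
        rw [show (PowerSeries.C (R := F)) (PowerSeries.constantCoeff (R := F) b)
            = algebraMap F (PowerSeries F) (PowerSeries.constantCoeff (R := F) b) by
          rw [PowerSeries.algebraMap_apply]; simp]
        exact algebraMap_smul _ _ _
      rw [h1, zero_add, h2, map_smul, smul_eq_mul]
    -- build a linear functional on W ⊗[F⟦X⟧] W killing the image of B x₀
    letI : Module (PowerSeries F) F := Module.compHom F (PowerSeries.constantCoeff (R := F))
    have hsmulF : ∀ (b : PowerSeries F) (c : F),
        b • c = PowerSeries.constantCoeff (R := F) b * c := fun _ _ => rfl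
    let Bφ : W →ₗ[PowerSeries F] W →ₗ[PowerSeries F] F :=
      LinearMap.mk₂ (PowerSeries F) (fun u u' => φ u * φ u')
        (fun u₁ u₂ u' => by
          change φ (u₁ + u₂) * φ u' = φ u₁ * φ u' + φ u₂ * φ u'
          rw [map_add, add_mul])
        (fun b u u' => by
          change φ (b • u) * φ u' = b • (φ u * φ u')
          rw [hφsmul, hsmulF, mul_assoc])
        (fun u u₁ u₂ => by
          change φ u * φ (u₁ + u₂) = φ u * φ u₁ + φ u * φ u₂
          rw [map_add, mul_add])
        (fun b u u' => by
          change φ u * φ (b • u') = b • (φ u * φ u')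
          rw [hφsmul, hsmulF]; ring)
    let Φ : (W ⊗[PowerSeries F] W) →ₗ[PowerSeries F] F := TensorProduct.lift Bφ
    have hΦt : ∀ u u' : W, Φ (u ⊗ₜ[PowerSeries F] u') = φ u * φ u' := fun u u' => rfl
    have hΦB : ∀ y : W ⊗[F] V, Φ (B x₀ y) = 0 := by
      intro y
      induction y using TensorProduct.induction_on with
      | zero => rw [hB0r, map_zero]
      | tmul u' v' =>
          rw [hBx, map_add, hΦt, hΦt,
            hφM _ ⟨(1 : PowerSeries F) ⊗ₜ[F] v', rfl⟩, zero_mul, mul_zero, add_zero]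
      | add y1 y2 h1 h2 => rw [hB_addr, map_add, h1, h2, add_zero]
    obtain ⟨y, hy⟩ := hs (w₀ ⊗ₜ[PowerSeries F] w₀)
      (LinearMap.mem_eqLocus.mpr (by
        simp only [LinearEquiv.coe_coe, LinearMap.id_coe, id_eq, TensorProduct.comm_tmul]))
    have : (0 : F) = φ w₀ * φ w₀ := by rw [← hΦB y, hy, hΦt]
    exact hφw₀ (mul_self_eq_zero.mp this.symm)
  · -- range fx x₀ = ⊤ → surjectivity onto symmetric tensors
    intro hr z hz
    have hz' : (TensorProduct.comm (PowerSeries F) W W) z = z := hz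
    have hsurj : Function.Surjective (fx x₀) := LinearMap.range_eq_top.mp hr
    -- key: every u ⊗ u' + u' ⊗ u is attained
    have key : ∀ (u u' : W), ∃ y, B x₀ y
        = u ⊗ₜ[PowerSeries F] u' + u' ⊗ₜ[PowerSeries F] u := by
      intro u u'
      obtain ⟨c, hc⟩ := hsurj u
      rw [← hc]; clear hc
      induction c using TensorProduct.induction_on with
      | zero => exact ⟨0, by rw [hB0r, map_zero, TensorProduct.zero_tmul,
          TensorProduct.tmul_zero, add_zero]⟩
      | tmul b v =>
          refine ⟨(b • u') ⊗ₜ[F] v, ?_⟩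
          have hmv : (fx x₀ ((1 : PowerSeries F) ⊗ₜ[F] v)) ⊗ₜ[PowerSeries F] (b • u')
              = (b • fx x₀ ((1 : PowerSeries F) ⊗ₜ[F] v)) ⊗ₜ[PowerSeries F] u' := by
            rw [TensorProduct.tmul_smul, TensorProduct.smul_tmul']
          rw [hBx, hfs b v, hmv, TensorProduct.smul_tmul, TensorProduct.smul_tmul]
      | add c c' hcih hcih' =>
          obtain ⟨y1, hy1⟩ := hcih
          obtain ⟨y2, hy2⟩ := hcih'
          refine ⟨y1 + y2, ?_⟩
          rw [hB_addr, hy1, hy2, map_add, TensorProduct.add_tmul, TensorProduct.tmul_add]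
          abel
    -- every z + comm z is attained
    have key2 : ∀ z : W ⊗[PowerSeries F] W, ∃ y, B x₀ y
        = z + (TensorProduct.comm (PowerSeries F) W W) z := by
      intro z
      induction z using TensorProduct.induction_on with
      | zero => exact ⟨0, by rw [hB0r, map_zero, add_zero]⟩
      | tmul u u' =>
          obtain ⟨y, hy⟩ := key u u'
          exact ⟨y, by rw [hy, TensorProduct.comm_tmul]⟩
      | add z1 z2 h1 h2 =>
          obtain ⟨y1, hy1⟩ := h1
          obtain ⟨y2, hy2⟩ := h2
          refine ⟨y1 + y2, ?_⟩
          rw [hB_addr, hy1, hy2, map_add]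
          abel
    obtain ⟨y, hy⟩ := key2 z
    rw [hz'] at hy
    refine ⟨((2 : F)⁻¹) • y, ?_⟩
    rw [hBsmul, hy, ← two_smul (PowerSeries F) z, smul_smul]
    rw [show ((2 : PowerSeries F)) = algebraMap F (PowerSeries F) 2 by
      rw [map_ofNat], ← map_mul, inv_mul_cancel₀ (two_ne_zero), map_one, one_smul]
end
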